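/- arXiv:2604.01578 — 9 statements merged into one kernel-verified Lean document; each statement's English description precedes it below -/
import Mathlib

section
/- For any integer n ≥ 0, the convergent series D(n) := Σ_{k=0}^∞ k^n / k! satisfies D(n) = b(n) · e, where e is Euler's number and (b(n)) are the Bell numbers defined by b(0) = 1 and b(n+1) = Σ_{k=0}^n C(n,k) b(k). -/
private lemma shift_eq (n k : ℕ) :
    ((k + 1 : ℕ) : ℝ) ^ (n + 1) / ((k + 1).factorial : ℝ) =
      ∑ j ∈ Finset.range (n + 1), (n.choose j : ℝ) * ((k : ℝ) ^ j / (k.factorial : ℝ)) := by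
  have hfac : ((k + 1).factorial : ℝ) = (k + 1 : ℝ) * (k.factorial : ℝ) := by
    push_cast [Nat.factorial_succ]; ring
  have hpow : ((k : ℝ) + 1) ^ (n + 1) = ((k : ℝ) + 1) ^ n * ((k : ℝ) + 1) := by ring
  have hbin : ((k : ℝ) + 1) ^ n = ∑ j ∈ Finset.range (n + 1), (n.choose j : ℝ) * (k : ℝ) ^ j := by
    rw [add_pow]
    apply Finset.sum_congr rfl
    intro j _; ring
  have hk0 : (k.factorial : ℝ) ≠ 0 := by positivity
  have hk1 : ((k : ℝ) + 1) ≠ 0 := by positivity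
  push_cast
  rw [hfac, hpow, hbin, Finset.sum_mul, Finset.sum_div]
  apply Finset.sum_congr rfl
  intro j _
  field_simp

private lemma sumD : ∀ n : ℕ, Summable (fun k : ℕ => (k : ℝ) ^ n / (k.factorial : ℝ)) := by
  intro n
  induction n using Nat.strong_induction_on with
  | _ n ih =>
    match n with
    | 0 =>
      exact (Real.summable_pow_div_factorial 1).congr (fun k => by simp)
    | n + 1 =>
        rw [← summable_nat_add_iff 1]
        have : Summable (fun k : ℕ =>
            ∑ j ∈ Finset.range (n + 1), (n.choose j : ℝ) * ((k : ℝ) ^ j / (k.factorial : ℝ))) := by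
          apply summable_sum
          intro j hj
          exact (ih j (Finset.mem_range.mp hj)).mul_left _
        exact this.congr (fun k => (shift_eq n k).symm)

private lemma exp_one : ∑' k : ℕ, (1 : ℝ) / (k.factorial : ℝ) = Real.exp 1 := by
  rw [Real.exp_eq_exp_ℝ, NormedSpace.exp_eq_tsum_div]
  simp

/-- Dobiński's formula: `∑_{k=0}^∞ k^n / k! = b(n) · e` where `b` are the Bell numbers. -/
theorem stmt_1 (b : ℕ → ℝ) (hb0 : b 0 = 1)
    (hb : ∀ n : ℕ, b (n + 1) = ∑ k ∈ Finset.range (n + 1), (n.choose k : ℝ) * b k)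
    (n : ℕ) :
    ∑' k : ℕ, (k : ℝ) ^ n / (k.factorial : ℝ) = b n * Real.exp 1 := by
  induction n using Nat.strong_induction_on with
  | _ n ih =>
    match n with
    | 0 =>
        rw [hb0, one_mul, ← exp_one]
        exact tsum_congr (fun k => by simp)
    | n + 1 =>
        rw [Summable.tsum_eq_zero_add (sumD (n + 1))]
        have h0 : ((0 : ℕ) : ℝ) ^ (n + 1) / ((0 : ℕ).factorial : ℝ) = 0 := by simp
        rw [h0, zero_add]
        have heq : ∀ k : ℕ, ((k + 1 : ℕ) : ℝ) ^ (n + 1) / ((k + 1).factorial : ℝ) =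
            ∑ j ∈ Finset.range (n + 1), (n.choose j : ℝ) * ((k : ℝ) ^ j / (k.factorial : ℝ)) :=
          shift_eq n
        rw [tsum_congr heq]
        rw [Summable.tsum_finsetSum (fun j _ => ((sumD j).mul_left _))]
        have : ∀ j ∈ Finset.range (n + 1),
            ∑' k : ℕ, (n.choose j : ℝ) * ((k : ℝ) ^ j / (k.factorial : ℝ)) =
              (n.choose j : ℝ) * (b j * Real.exp 1) := by
          intro j hj
          rw [tsum_mul_left, ih j (Finset.mem_range.mp hj)]
        rw [Finset.sum_congr rfl this, hb n, Finset.sum_mul]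
        apply Finset.sum_congr rfl
        intro j _; ring
end

section
/- For any integers r ≥ 1 and n ≥ 0 and any real (or complex) x, the convergent series D_r(n; x) := Σ_{k=0}^∞ k^n x^k / (k!)^r satisfies the recurrence D_r(n+r; x) = x · Σ_{k=0}^n C(n,k) · D_r(k; x). -/
/-- Recurrence for `D_r(n; x) = ∑_{k=0}^∞ k^n x^k / (k!)^r`:
`D_r(n+r; x) = x · ∑_{k=0}^n C(n,k) D_r(k; x)`. -/
theorem stmt_2 (r n : ℕ) (hr : 1 ≤ r) (x : ℝ) :
    ∑' k : ℕ, (k : ℝ) ^ (n + r) * x ^ k / (k.factorial : ℝ) ^ r =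
      x * ∑ k ∈ Finset.range (n + 1), (n.choose k : ℝ) *
        (∑' j : ℕ, (j : ℝ) ^ k * x ^ j / (j.factorial : ℝ) ^ r) := by
  have hsum : ∀ m : ℕ, Summable (fun j : ℕ => (j:ℝ)^m * x^j / (j.factorial:ℝ)^r) := by
    intro m
    apply Summable.of_norm_bounded (g := fun j : ℕ => ((2:ℝ)^m * |x|)^j / (j.factorial : ℝ))
      (Real.summable_pow_div_factorial _)
    intro j
    have h1 : (1:ℝ) ≤ (j.factorial : ℝ) := by exact_mod_cast j.factorial_pos
    have hle : (j.factorial : ℝ) ≤ (j.factorial : ℝ)^r := le_self_pow₀ h1 (by omega)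
    have hj : (j:ℝ) ≤ 2^j := by exact_mod_cast (Nat.lt_two_pow_self : j < 2 ^ j).le
    have h2 : (j:ℝ)^m ≤ ((2:ℝ)^m)^j := by
      calc (j:ℝ)^m ≤ ((2:ℝ)^j)^m := by gcongr
      _ = ((2:ℝ)^m)^j := by rw [← pow_mul, ← pow_mul, Nat.mul_comm]
    rw [norm_div, norm_mul, norm_pow, norm_pow]
    simp only [Real.norm_natCast, Real.norm_eq_abs, abs_abs]
    rw [mul_pow, abs_of_pos (by positivity : (0:ℝ) < (j.factorial:ℝ)^r),
      abs_of_nonneg (Nat.cast_nonneg j)]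
    gcongr
  have key : ∀ j : ℕ, ((j+1:ℕ):ℝ)^(n+r) * x^(j+1) / (((j+1).factorial:ℝ))^r =
      ∑ k ∈ Finset.range (n+1), (n.choose k : ℝ) * (x * ((j:ℝ)^k * x^j / (j.factorial:ℝ)^r)) := by
    intro j
    have hfact : ((j.factorial:ℝ)) ≠ 0 := by positivity
    have hj1 : ((j:ℝ)+1) ≠ 0 := by positivity
    have hb : ((j:ℝ)+1)^n = ∑ k ∈ Finset.range (n+1), (n.choose k:ℝ) * (j:ℝ)^k := by
      rw [add_pow]
      refine Finset.sum_congr rfl fun k _ => ?_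
      ring
    have hstep : ((j+1:ℕ):ℝ)^(n+r) * x^(j+1) / (((j+1).factorial:ℝ))^r =
        ((j:ℝ)+1)^n * x^(j+1) / (j.factorial:ℝ)^r := by
      rw [Nat.factorial_succ]
      push_cast
      rw [mul_pow, pow_add]
      field_simp
    rw [hstep, hb, Finset.sum_mul, Finset.sum_div]
    refine Finset.sum_congr rfl fun k _ => ?_
    rw [pow_succ]
    ring
  rw [Summable.tsum_eq_zero_add (hsum (n+r))]
  have h0 : ((0:ℕ):ℝ)^(n+r) * x^0 / ((0:ℕ).factorial:ℝ)^r = 0 := by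
    rw [Nat.cast_zero, zero_pow (by omega : n + r ≠ 0)]
    simp
  rw [h0, zero_add]
  calc (∑' j : ℕ, ((j+1:ℕ):ℝ)^(n+r) * x^(j+1) / (((j+1).factorial:ℝ))^r)
      = ∑' j : ℕ, ∑ k ∈ Finset.range (n+1), (n.choose k : ℝ) *
          (x * ((j:ℝ)^k * x^j / (j.factorial:ℝ)^r)) := tsum_congr key
    _ = ∑ k ∈ Finset.range (n+1), ∑' j : ℕ, (n.choose k : ℝ) *
          (x * ((j:ℝ)^k * x^j / (j.factorial:ℝ)^r)) := by
        exact Summable.tsum_finsetSum fun k _ => (((hsum k).mul_left x).mul_left _)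
    _ = x * ∑ k ∈ Finset.range (n+1), (n.choose k : ℝ) *
          (∑' j : ℕ, (j:ℝ)^k * x^j / (j.factorial:ℝ)^r) := by
        rw [Finset.mul_sum]
        refine Finset.sum_congr rfl fun k _ => ?_
        rw [tsum_mul_left, tsum_mul_left]
        ring
end

section
/- For any integers r ≥ 1 and n ≥ 0 and any x, D_r(n; x) = Σ_{j=0}^{r-1} b_{r,j}(n; x) · D_r(j; x), where the coefficients b_{r,j}(n; x) are defined by b_{r,j}(n; x) = δ_{j,n} for 0 ≤ n ≤ r−1 and the recurrence b_{r,j}(n+r; x) = x · Σ_{k=0}^n C(n,k) b_{r,j}(k; x) for n ≥ 0. -/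
open Finset

private lemma aux_choose_le_two_pow (n k : ℕ) : n.choose k ≤ 2 ^ n := by
  rcases le_or_gt k n with h | h
  · calc n.choose k ≤ ∑ m ∈ range (n + 1), n.choose m :=
        Finset.single_le_sum (fun i _ => Nat.zero_le _) (mem_range.2 (Nat.lt_succ_of_le h))
      _ = 2 ^ n := Nat.sum_range_choose n
  · simp [Nat.choose_eq_zero_of_lt h]

private lemma aux_pow_le (m k : ℕ) : k ^ m ≤ m.factorial * 2 ^ (m + k) := by
  have h1 : k ^ m * k.factorial ≤ (k + m).factorial := by
    calc k ^ m * k.factorial ≤ (k + 1).ascFactorial m * k.factorial :=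
          Nat.mul_le_mul_right _
            (le_trans (Nat.pow_le_pow_left (Nat.le_succ k) m) (Nat.pow_succ_le_ascFactorial (k+1) m))
      _ = (k + m).factorial := by rw [Nat.mul_comm, Nat.factorial_mul_ascFactorial]
  have h2 : (k + m).factorial = (k + m).choose m * m.factorial * k.factorial := by
    have := Nat.choose_mul_factorial_mul_factorial (Nat.le_add_left m k)
    simpa [Nat.add_sub_cancel] using this.symm
  have h3 : k ^ m ≤ (k + m).choose m * m.factorial := by
    have h1' : k ^ m * k.factorial ≤ (k + m).choose m * m.factorial * k.factorial := by
      rw [h2] at h1; exact h1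
    exact Nat.le_of_mul_le_mul_right h1' k.factorial_pos
  calc k ^ m ≤ (k + m).choose m * m.factorial := h3
    _ ≤ 2 ^ (k + m) * m.factorial := Nat.mul_le_mul_right _ (aux_choose_le_two_pow _ _)
    _ = m.factorial * 2 ^ (m + k) := by rw [Nat.add_comm k m]; ring

private lemma aux_summable (r : ℕ) (hr : 1 ≤ r) (x : ℝ) (m : ℕ) :
    Summable (fun k : ℕ => (k : ℝ) ^ m * x ^ k / (k.factorial : ℝ) ^ r) := by
  have hsum : Summable (fun k : ℕ =>
      (m.factorial : ℝ) * 2 ^ m * ((2 * |x|) ^ k / k.factorial)) :=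
    (Real.summable_pow_div_factorial (2 * |x|)).mul_left _
  apply Summable.of_norm
  apply hsum.of_nonneg_of_le (fun k => norm_nonneg _)
  intro k
  have hfac1 : (1 : ℝ) ≤ (k.factorial : ℝ) := by exact_mod_cast k.factorial_pos
  have hfacr : (k.factorial : ℝ) ≤ (k.factorial : ℝ) ^ r :=
    le_self_pow₀ (by linarith) (by omega)
  have hnum : (k : ℝ) ^ m ≤ (m.factorial : ℝ) * 2 ^ (m + k) := by
    exact_mod_cast aux_pow_le m k
  have h1 : ‖(k : ℝ) ^ m * x ^ k / (k.factorial : ℝ) ^ r‖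
      = (k : ℝ) ^ m * |x| ^ k / (k.factorial : ℝ) ^ r := by
    rw [Real.norm_eq_abs, abs_div, abs_mul, abs_pow, abs_pow, abs_pow]
    rw [Nat.abs_cast, abs_of_nonneg (by positivity : (0:ℝ) ≤ (k.factorial : ℝ))]
  rw [h1]
  calc (k : ℝ) ^ m * |x| ^ k / (k.factorial : ℝ) ^ r
      ≤ ((m.factorial : ℝ) * 2 ^ (m + k)) * |x| ^ k / (k.factorial : ℝ) := by
        gcongr
      _ = (m.factorial : ℝ) * 2 ^ m * ((2 * |x|) ^ k / k.factorial) := by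
        rw [pow_add, mul_pow]; ring

private lemma aux_rec (r : ℕ) (hr : 1 ≤ r) (x : ℝ) (n : ℕ) :
    ∑' k : ℕ, (k : ℝ) ^ (n + r) * x ^ k / (k.factorial : ℝ) ^ r =
      x * ∑ j ∈ range (n + 1), (n.choose j : ℝ) *
        ∑' k : ℕ, (k : ℝ) ^ j * x ^ k / (k.factorial : ℝ) ^ r := by
  have hS := aux_summable r hr x
  rw [Summable.tsum_eq_zero_add (hS (n + r))]
  have h0 : ((0 : ℕ) : ℝ) ^ (n + r) * x ^ 0 / (((0 : ℕ).factorial : ℕ) : ℝ) ^ r = 0 := by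
    norm_num [zero_pow (show n + r ≠ 0 by omega)]
  have hpt : ∀ k : ℕ, ((k + 1 : ℕ) : ℝ) ^ (n + r) * x ^ (k + 1) / ((k + 1).factorial : ℝ) ^ r
      = ∑ j ∈ range (n + 1), x * (n.choose j : ℝ) *
          ((k : ℝ) ^ j * x ^ k / (k.factorial : ℝ) ^ r) := by
    intro k
    have hbin : ((k : ℝ) + 1) ^ n = ∑ j ∈ range (n + 1), (k : ℝ) ^ j * (n.choose j : ℝ) := by
      simpa using add_pow (k : ℝ) 1 n
    have hrw : ∑ j ∈ range (n + 1), x * (n.choose j : ℝ) *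
          ((k : ℝ) ^ j * x ^ k / (k.factorial : ℝ) ^ r)
        = (∑ j ∈ range (n + 1), (k : ℝ) ^ j * (n.choose j : ℝ))
            * (x * x ^ k / (k.factorial : ℝ) ^ r) := by
      rw [Finset.sum_mul]
      exact Finset.sum_congr rfl fun j _ => by ring
    rw [hrw, ← hbin]
    have hk1 : ((k : ℝ) + 1) ≠ 0 := by positivity
    have hkf : ((k.factorial : ℝ)) ≠ 0 := by positivity
    rw [Nat.factorial_succ]
    push_cast
    rw [pow_add, mul_pow]
    field_simp
    ring
  rw [tsum_congr hpt, h0, zero_add]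
  rw [Summable.tsum_finsetSum (fun j _ => ((hS j).mul_left _))]
  rw [Finset.mul_sum]
  refine Finset.sum_congr rfl fun j _ => ?_
  rw [tsum_mul_left]
  ring

/-- `D_r(n; x) = ∑_{j=0}^{r-1} b_{r,j}(n; x) · D_r(j; x)`, where the coefficients
`b j n = b_{r,j}(n; x)` satisfy `b_{r,j}(n;x) = δ_{j,n}` for `0 ≤ n ≤ r-1` and the
recurrence `b_{r,j}(n+r; x) = x ∑_{k=0}^n C(n,k) b_{r,j}(k; x)`. -/
theorem stmt_3 (r : ℕ) (hr : 1 ≤ r) (x : ℝ) (b : ℕ → ℕ → ℝ)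
    (hbinit : ∀ j n : ℕ, n ≤ r - 1 → b j n = if j = n then 1 else 0)
    (hbrec : ∀ j n : ℕ, b j (n + r) = x * ∑ k ∈ Finset.range (n + 1), (n.choose k : ℝ) * b j k)
    (n : ℕ) :
    ∑' k : ℕ, (k : ℝ) ^ n * x ^ k / (k.factorial : ℝ) ^ r =
      ∑ j ∈ Finset.range r, b j n *
        (∑' k : ℕ, (k : ℝ) ^ j * x ^ k / (k.factorial : ℝ) ^ r) := by
  induction n using Nat.strong_induction_on with
  | _ n ih =>
    rcases lt_or_ge n r with hn | hn
    · have hb : ∀ j, b j n = if j = n then 1 else 0 := fun j => hbinit j n (by omega)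
      rw [Finset.sum_congr rfl fun j _ => by rw [hb j]]
      simp only [ite_mul, one_mul, zero_mul]
      rw [Finset.sum_ite_eq' (Finset.range r) n
        (fun j => (∑' k : ℕ, (k : ℝ) ^ j * x ^ k / (k.factorial : ℝ) ^ r))]
      simp [Finset.mem_range.2 hn]
    · obtain ⟨m, rfl⟩ : ∃ m, n = m + r := ⟨n - r, (Nat.sub_add_cancel hn).symm⟩
      rw [aux_rec r hr x m]
      have hRHS : ∀ j ∈ range r, b j (m + r) *
            (∑' k : ℕ, (k : ℝ) ^ j * x ^ k / (k.factorial : ℝ) ^ r)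
          = ∑ k ∈ range (m + 1), x * ((m.choose k : ℝ) *
              (b j k * (∑' i : ℕ, (i : ℝ) ^ j * x ^ i / (i.factorial : ℝ) ^ r))) := by
        intro j _
        rw [hbrec j m, mul_assoc, Finset.sum_mul, Finset.mul_sum]
        exact Finset.sum_congr rfl fun k _ => by ring
      rw [Finset.sum_congr rfl hRHS, Finset.sum_comm, Finset.mul_sum]
      refine Finset.sum_congr rfl fun k hk => ?_
      rw [ih k (by exact lt_of_lt_of_le (Finset.mem_range.1 hk) (by omega))]
      simp only [Finset.mul_sum]
end

section
/- For every prime p and integers r ≥ 1, n ≥ 0, the sum S_r^{(p)}(n) := Σ_{k=0}^{p-1} k^n / (k!)^r, computed in the field ℤ/pℤ (where k! is invertible for 0 ≤ k ≤ p−1), satisfies S_r^{(p)}(n+r) ≡ Σ_{k=0}^n C(n,k) S_r^{(p)}(k) + (−1)^{r−1} δ_{n,0} (mod p). -/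
/-- Mod-`p` recurrence for `S_r^{(p)}(n) = ∑_{k=0}^{p-1} k^n / (k!)^r` in `ℤ/pℤ`:
`S_r^{(p)}(n+r) = ∑_{k=0}^n C(n,k) S_r^{(p)}(k) + (-1)^{r-1} δ_{n,0}`. -/
theorem stmt_4 (p : ℕ) [Fact p.Prime] (r n : ℕ) (hr : 1 ≤ r) :
    ∑ k ∈ Finset.range p, (k : ZMod p) ^ (n + r) / (k.factorial : ZMod p) ^ r =
      (∑ k ∈ Finset.range (n + 1), (n.choose k : ZMod p) *
          (∑ j ∈ Finset.range p, (j : ZMod p) ^ k / (j.factorial : ZMod p) ^ r))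
        + (if n = 0 then (-1) ^ (r - 1) else 0) := by
  have hp := (Fact.out : p.Prime)
  obtain ⟨m, hm⟩ : ∃ m, p = m + 1 := ⟨p - 1, (Nat.succ_pred_eq_of_pos hp.pos).symm⟩
  have hrange : Finset.range p = Finset.range (m + 1) := by rw [hm]
  -- Step 1: shift index
  have step1 : ∑ k ∈ Finset.range p, (k : ZMod p) ^ (n + r) / (k.factorial : ZMod p) ^ r
      = ∑ k ∈ Finset.range m, ((k : ZMod p) + 1) ^ n / (k.factorial : ZMod p) ^ r := by
    rw [hrange, Finset.sum_range_succ']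
    have h0 : ((0:ℕ) : ZMod p) ^ (n + r) / ((Nat.factorial 0 : ℕ) : ZMod p) ^ r = 0 := by
      have : n + r ≠ 0 := by omega
      simp [this]
      intro; omega
    rw [h0, add_zero]
    refine Finset.sum_congr rfl fun k hk => ?_
    rw [Finset.mem_range] at hk
    have hne : ((k : ZMod p) + 1) ≠ 0 := by
      have : ((k + 1 : ℕ) : ZMod p) ≠ 0 := by
        rw [Ne, ZMod.natCast_eq_zero_iff]
        exact fun h => absurd (Nat.le_of_dvd (by omega) h) (by omega)
      simpa using this
    push_cast [Nat.factorial_succ]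
    rw [pow_add, mul_pow, mul_comm (((k:ZMod p)+1)^n), mul_div_mul_left _ _ (pow_ne_zero r hne)]
  rw [step1]
  -- Step 2: binomial expansion and swap
  have step2 : ∑ k ∈ Finset.range m, ((k : ZMod p) + 1) ^ n / (k.factorial : ZMod p) ^ r
      = ∑ i ∈ Finset.range (n+1), (n.choose i : ZMod p) *
          ∑ k ∈ Finset.range m, (k : ZMod p) ^ i / (k.factorial : ZMod p) ^ r := by
    have expand : ∀ k : ℕ, ((k : ZMod p) + 1) ^ n
        = ∑ i ∈ Finset.range (n+1), (k : ZMod p) ^ i * (n.choose i : ZMod p) := by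
      intro k
      rw [add_pow]
      exact Finset.sum_congr rfl fun i _ => by rw [one_pow, mul_one]
    simp_rw [expand, Finset.sum_div]
    rw [Finset.sum_comm]
    refine Finset.sum_congr rfl fun i _ => ?_
    rw [Finset.mul_sum]
    refine Finset.sum_congr rfl fun k _ => by ring
  rw [step2]
  -- Step 3: extend inner sum to range p
  have step3 : ∀ i, ∑ k ∈ Finset.range m, (k : ZMod p) ^ i / (k.factorial : ZMod p) ^ r
      = (∑ j ∈ Finset.range p, (j : ZMod p) ^ i / (j.factorial : ZMod p) ^ r)
        - (m : ZMod p) ^ i / (m.factorial : ZMod p) ^ r := by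
    intro i
    rw [hrange, Finset.sum_range_succ]
    ring
  simp_rw [step3, mul_sub, Finset.sum_sub_distrib]
  -- correction term
  have hm1 : (m : ZMod p) = -1 := by
    have : ((m + 1 : ℕ) : ZMod p) = 0 := by rw [← hm]; exact ZMod.natCast_self p
    push_cast at this; linear_combination this
  have hmf : (m.factorial : ZMod p) = -1 := by
    have hmp : m = p - 1 := by omega
    rw [hmp]; exact ZMod.wilsons_lemma p
  rw [hm1, hmf]
  have halt : ∑ i ∈ Finset.range (n+1), (n.choose i : ZMod p) * ((-1:ZMod p) ^ i / (-1:ZMod p) ^ r)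
      = (if n = 0 then 1 else 0) / (-1:ZMod p) ^ r := by
    simp_rw [← mul_div_assoc]
    rw [← Finset.sum_div]
    congr 1
    have h1 := Int.alternating_sum_range_choose (n := n)
    have h2 : ((∑ i ∈ Finset.range (n + 1), (-1:ℤ) ^ i * n.choose i : ℤ) : ZMod p)
        = ((if n = 0 then (1:ℤ) else 0) : ZMod p) := by rw [h1]; split_ifs <;> simp
    push_cast at h2
    rw [← h2]
    exact Finset.sum_congr rfl fun i _ => by ring
  rw [halt, sub_eq_add_neg]
  congr 1
  obtain ⟨s, hs⟩ : ∃ s, r = s + 1 := ⟨r - 1, by omega⟩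
  have hinv : ((-1:ZMod p) ^ r)⁻¹ = (-1:ZMod p) ^ r := by
    refine inv_eq_of_mul_eq_one_right ?_
    rw [← pow_add, ← two_mul, pow_mul]; norm_num
  by_cases hn : n = 0
  · simp only [if_pos hn, one_div, hinv, hs, Nat.add_sub_cancel, pow_succ]
    ring_nf
    simp
  · simp [hn]
end

section
/- For every odd prime p and every integer n ≥ 0, Σ_{k=0}^{p-1} k^n / k! ≡ b(n) · Σ_{k=0}^{p-1} 1/k! + g(n) (mod p), where b(n) are the Bell numbers and g(n) is defined by g(0) = 0, g(1) = 1, and g(n+1) = Σ_{k=0}^n C(n,k) g(k) for n ≥ 1. -/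
/-- Finite analogue of Dobiński's formula: for an odd prime `p`,
`∑_{k=0}^{p-1} k^n/k! ≡ b(n) ∑_{k=0}^{p-1} 1/k! + g(n) (mod p)`, where `b` are the Bell
numbers and `g(0)=0, g(1)=1` with the same binomial recurrence for `n ≥ 1`. -/
theorem stmt_5 (p : ℕ) [Fact p.Prime] (hodd : Odd p)
    (b : ℕ → ℕ) (hb0 : b 0 = 1)
    (hb : ∀ n : ℕ, b (n + 1) = ∑ k ∈ Finset.range (n + 1), n.choose k * b k)
    (g : ℕ → ℕ) (hg0 : g 0 = 0) (hg1 : g 1 = 1)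
    (hg : ∀ n : ℕ, 1 ≤ n → g (n + 1) = ∑ k ∈ Finset.range (n + 1), n.choose k * g k)
    (n : ℕ) :
    ∑ k ∈ Finset.range p, (k : ZMod p) ^ n / (k.factorial : ZMod p) =
      (b n : ZMod p) * (∑ k ∈ Finset.range p, 1 / (k.factorial : ZMod p)) + (g n : ZMod p) := by
  have hp : p.Prime := Fact.out
  obtain ⟨q, hq⟩ : ∃ q, p = q + 1 := ⟨p - 1, (Nat.succ_pred_eq_of_pos hp.pos).symm⟩
  set S : ℕ → ZMod p := fun m => ∑ k ∈ Finset.range p, (k : ZMod p) ^ m / (k.factorial : ZMod p)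
    with hS
  have key : ∀ m : ℕ, S (m + 1) =
      (∑ i ∈ Finset.range (m + 1), (m.choose i : ZMod p) * S i) + (0 : ZMod p) ^ m := by
    intro m
    have h1 : S (m + 1) = ∑ j ∈ Finset.range q,
        ((j : ZMod p) + 1) ^ m / (j.factorial : ZMod p) := by
      rw [hS]
      simp only
      rw [show Finset.range p = Finset.range (q + 1) from by rw [hq], Finset.sum_range_succ']
      simp only [Nat.cast_zero, zero_pow (Nat.succ_ne_zero m), zero_div, add_zero]
      refine Finset.sum_congr rfl fun j hj => ?_
      have hjne : ((j : ZMod p) + 1) ≠ 0 := by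
        have : ((j + 1 : ℕ) : ZMod p) ≠ 0 := by
          simp only [Ne, ZMod.natCast_eq_zero_iff]
          have hjlt : j < q := Finset.mem_range.mp hj
          exact Nat.not_dvd_of_pos_of_lt (Nat.succ_pos j) (by omega)
        simpa using this
      rw [Nat.factorial_succ, Nat.cast_mul, Nat.cast_succ, pow_succ,
        mul_comm (((j : ZMod p) + 1) ^ m) _, mul_div_mul_left _ _ hjne]
    have h2 : ((q : ZMod p) + 1) = 0 := by
      have : ((q + 1 : ℕ) : ZMod p) = 0 := by rw [← hq]; exact ZMod.natCast_self p
      simpa using this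
    have h3 : (q.factorial : ZMod p) = -1 := by
      have := ZMod.wilsons_lemma p
      rwa [show p - 1 = q from by omega] at this
    have h4 : ∑ j ∈ Finset.range p, ((j : ZMod p) + 1) ^ m / (j.factorial : ZMod p) =
        (∑ j ∈ Finset.range q, ((j : ZMod p) + 1) ^ m / (j.factorial : ZMod p))
          + (0 : ZMod p) ^ m / (-1) := by
      rw [show Finset.range p = Finset.range (q + 1) from by rw [hq], Finset.sum_range_succ, h2, h3]
    have h5 : ∑ j ∈ Finset.range p, ((j : ZMod p) + 1) ^ m / (j.factorial : ZMod p) =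
        ∑ i ∈ Finset.range (m + 1), (m.choose i : ZMod p) * S i := by
      have expand : ∀ x : ZMod p, (x + 1) ^ m =
          ∑ i ∈ Finset.range (m + 1), x ^ i * (m.choose i : ZMod p) := by
        intro x
        rw [add_pow]
        simp
      simp only [expand, Finset.sum_div]
      rw [Finset.sum_comm]
      refine Finset.sum_congr rfl fun i _ => ?_
      rw [hS, Finset.mul_sum]
      refine Finset.sum_congr rfl fun j _ => ?_
      ring
    rw [h1, eq_comm]
    have := h4.symm.trans h5
    rw [← this]
    ring
  have hS0 : S 0 = ∑ k ∈ Finset.range p, 1 / (k.factorial : ZMod p) :=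
    Finset.sum_congr rfl fun k _ => by rw [pow_zero]
  induction n using Nat.strong_induction_on with
  | _ n ih =>
    match n with
    | 0 =>
      rw [show (∑ k ∈ Finset.range p, (k : ZMod p) ^ 0 / (k.factorial : ZMod p)) = S 0 from rfl,
        hS0, hb0, hg0]
      push_cast
      ring
    | 1 =>
      have h := key 0
      simp only [zero_add, pow_zero, Finset.sum_range_one, Nat.choose_self, Nat.cast_one, one_mul] at h
      have hb1 : b 1 = 1 := by rw [hb 0]; simp [hb0]
      rw [show (∑ k ∈ Finset.range p, (k : ZMod p) ^ 1 / (k.factorial : ZMod p)) = S 1 from rfl,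
        h, hS0, hb1, hg1]
      push_cast
      ring
    | (m + 2) =>
      have hkey := key (m + 1)
      have hbm := hb (m + 1)
      have hgm := hg (m + 1) (Nat.le_add_left 1 m)
      have h0 : ((0 : ZMod p)) ^ (m + 1) = 0 := zero_pow (Nat.succ_ne_zero m)
      rw [show (∑ k ∈ Finset.range p, (k : ZMod p) ^ (m+2) / (k.factorial : ZMod p)) = S (m+2)
        from rfl, hkey, h0, add_zero, hbm, hgm]
      push_cast
      rw [Finset.sum_mul, ← Finset.sum_add_distrib]
      refine Finset.sum_congr rfl fun i hi => ?_
      have hi' : i < m + 2 := Finset.mem_range.mp hi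
      have hih := ih i (by omega)
      rw [show S i = ∑ k ∈ Finset.range p, (k : ZMod p) ^ i / (k.factorial : ZMod p) from rfl,
        hih]
      ring
end

section
/- The functions E_j(z) := ϑ^j E(z) for j = 0, 1, ..., r−1, where E(z) = Σ_{n=0}^∞ z^{rn}/(n!)^r and ϑ = z·d/dz, are linearly independent over the field of rational functions ℂ(z). -/
open Finset Polynomial

namespace Stmt8

/-- coefficients of E -/
noncomputable def c (r m : ℕ) : ℂ :=
  if r ∣ m then 1 / ((m / r).factorial : ℂ) ^ r else 0

/-- "entire" coefficient sequences -/
def Ent (a : ℕ → ℂ) : Prop := ∀ R : ℝ, 0 ≤ R → Summable fun m => ‖a m‖ * R ^ m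

lemma Ent.summable {a : ℕ → ℂ} (ha : Ent a) (z : ℂ) :
    Summable fun m => a m * z ^ m := by
  refine Summable.of_norm ?_
  have := ha ‖z‖ (norm_nonneg z)
  refine this.congr fun m => ?_
  rw [norm_mul, norm_pow]

lemma Ent.mul_nat {a : ℕ → ℂ} (ha : Ent a) : Ent (fun m => (m : ℂ) * a m) := by
  intro R hR
  refine Summable.of_nonneg_of_le (fun m => by positivity) (fun m => ?_) (ha (2 * R) (by linarith))
  have h1 : (m : ℝ) ≤ 2 ^ m := by
    exact_mod_cast (Nat.lt_two_pow_self (n := m)).le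
  calc ‖(m : ℂ) * a m‖ * R ^ m = (m : ℝ) * (‖a m‖ * R ^ m) := by
        rw [norm_mul, Complex.norm_natCast]; ring
    _ ≤ 2 ^ m * (‖a m‖ * R ^ m) := by
        refine mul_le_mul_of_nonneg_right h1 (by positivity)
    _ = ‖a m‖ * (2 * R) ^ m := by rw [mul_pow]; ring

lemma ent_c {r : ℕ} (hr : 1 ≤ r) : Ent (c r) := by
  intro R hR
  have hvanish : ∀ m ∉ Set.range (fun n => r * n), ‖c r m‖ * R ^ m = 0 := by
    intro m hm
    have : ¬ r ∣ m := by
      rintro ⟨k, hk⟩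
      exact hm ⟨k, hk.symm⟩
    simp [c, this]
  rw [← (Function.Injective.summable_iff (f := fun m => ‖c r m‖ * R ^ m)
      (fun n n' h => by
        have : r ≠ 0 := by omega
        exact Nat.eq_of_mul_eq_mul_left (by omega) h) hvanish)]
  have key : ∀ n : ℕ, ((fun m => ‖c r m‖ * R ^ m) ∘ (fun n => r * n)) n
      ≤ (R ^ r) ^ n / (n.factorial : ℝ) := by
    intro n
    have h1 : c r (r * n) = 1 / ((n.factorial : ℂ)) ^ r := by
      simp [c, Nat.mul_div_cancel_left n (by omega : 0 < r)]
    simp only [Function.comp_apply, h1]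
    have hfn : (1 : ℝ) ≤ (n.factorial : ℝ) := by exact_mod_cast n.factorial_pos
    have h2 : ‖(1 : ℂ) / ((n.factorial : ℂ)) ^ r‖ = 1 / ((n.factorial : ℝ)) ^ r := by
      rw [norm_div, norm_one, norm_pow, Complex.norm_natCast]
    rw [h2, pow_mul]
    rw [div_mul_eq_mul_div, one_mul, div_le_div_iff₀ (by positivity) (by positivity)]
    calc ((R ^ r) ^ n) * (n.factorial : ℝ) ≤ ((R ^ r) ^ n) * (n.factorial : ℝ) ^ r := by
          refine mul_le_mul_of_nonneg_left ?_ (pow_nonneg (pow_nonneg hR r) n)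
          exact le_self_pow₀ hfn (by omega)
      _ = (R ^ r) ^ n * (n.factorial:ℝ) ^ r := rfl
  refine Summable.of_nonneg_of_le (fun n => mul_nonneg (norm_nonneg _) (pow_nonneg hR _)) key ?_
  exact Real.summable_pow_div_factorial (R ^ r)


noncomputable def S (a : ℕ → ℂ) : ℂ → ℂ := fun z => ∑' m, a m * z ^ m

lemma Ent.pow_mul {a : ℕ → ℂ} (ha : Ent a) (j : ℕ) : Ent (fun m => (m : ℂ) ^ j * a m) := by
  induction j with
  | zero => simpa using ha
  | succ j ih =>
      have := ih.mul_nat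
      refine fun R hR => (this R hR).congr fun m => ?_
      simp only [← mul_assoc, ← pow_succ']

lemma hasDerivAt_S {a : ℕ → ℂ} (ha : Ent a) (z : ℂ) :
    HasDerivAt (S a) (∑' m, a m * ((m : ℂ) * z ^ (m - 1))) z := by
  set R : ℝ := ‖z‖ + 1 with hR
  have hRpos : 0 < R := by rw [hR]; positivity
  set M : ℝ := max 1 R with hM
  have hM1 : (1 : ℝ) ≤ M := le_max_left _ _
  have hM0 : (0 : ℝ) ≤ M := by linarith
  have hu : Summable fun m : ℕ => (m : ℝ) * ‖a m‖ * M ^ m := by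
    refine (ha.mul_nat M hM0).congr fun m => ?_
    rw [norm_mul, Complex.norm_natCast]
  refine hasDerivAt_tsum_of_isPreconnected hu (Metric.isOpen_ball)
    (convex_ball (0:ℂ) R).isPreconnected
    (fun m y _ => (hasDerivAt_pow m y).const_mul (a m))
    (fun m y hy => ?_) (Metric.mem_ball_self hRpos)
    (ha.summable 0) ?_
  · have hyR : ‖y‖ ≤ R := by
      have := mem_ball_zero_iff.mp hy
      linarith [this.le]
    have h1 : ‖y‖ ^ (m - 1) ≤ M ^ m := by
      calc ‖y‖ ^ (m - 1) ≤ M ^ (m - 1) :=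
            pow_le_pow_left₀ (norm_nonneg y) (hyR.trans (le_max_right 1 R)) _
        _ ≤ M ^ m := pow_le_pow_right₀ hM1 (Nat.sub_le m 1)
    calc ‖a m * ((m : ℂ) * y ^ (m - 1))‖ = ‖a m‖ * ((m : ℝ) * ‖y‖ ^ (m - 1)) := by
          rw [norm_mul, norm_mul, Complex.norm_natCast, norm_pow]
      _ ≤ ‖a m‖ * ((m : ℝ) * M ^ m) := by
          refine mul_le_mul_of_nonneg_left (mul_le_mul_of_nonneg_left h1 (by positivity))
            (norm_nonneg _)
      _ = (m : ℝ) * ‖a m‖ * M ^ m := by ring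
  · exact mem_ball_zero_iff.mpr (by rw [hR]; linarith)

lemma theta_S {a : ℕ → ℂ} (ha : Ent a) :
    (fun w => w * deriv (S a) w) = S (fun m => (m : ℂ) * a m) := by
  funext z
  rw [(hasDerivAt_S ha z).deriv]
  rw [S, ← tsum_mul_left]
  refine tsum_congr fun m => ?_
  cases m with
  | zero => simp
  | succ k =>
      simp only [Nat.add_sub_cancel, pow_succ]
      push_cast
      ring

lemma theta_iter_S {a : ℕ → ℂ} (ha : Ent a) (j : ℕ) :
    (fun f : ℂ → ℂ => fun w => w * deriv f w)^[j] (S a)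
      = S (fun m => (m : ℂ) ^ j * a m) := by
  induction j with
  | zero => simp only [Function.iterate_zero, id_eq]; congr 1; funext m; simp
  | succ j ih =>
      rw [Function.iterate_succ_apply', ih, theta_S (ha.pow_mul j)]
      exact congrArg S (by funext m; ring)


/-- shifted coefficients, i.e. coefficients of `z^k * S a z` -/
noncomputable def shift (k : ℕ) (a : ℕ → ℂ) : ℕ → ℂ :=
  fun m => if k ≤ m then a (m - k) else 0

lemma base_eq (r : ℕ) (hr : 1 ≤ r) :
    (fun w : ℂ => ∑' n : ℕ, w ^ (r * n) / (n.factorial : ℂ) ^ r) = S (c r) := by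
  funext w
  rw [S]
  rw [← Function.Injective.tsum_eq (g := fun n : ℕ => r * n)
    (f := fun m => c r m * w ^ m)
    (fun a b hab => Nat.eq_of_mul_eq_mul_left (by omega) hab) ?_]
  · refine tsum_congr fun n => ?_
    have h1 : c r (r * n) = 1 / ((n.factorial : ℂ)) ^ r := by
      simp [c, Nat.mul_div_cancel_left n (by omega : 0 < r)]
    rw [h1]; ring
  · intro m hm
    simp only [Function.mem_support] at hm
    by_cases hdvd : r ∣ m
    · obtain ⟨k, hk⟩ := hdvd
      exact ⟨k, hk.symm⟩
    · exact absurd (by simp [c, hdvd]) hm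

lemma Ent.shift {a : ℕ → ℂ} (ha : Ent a) (k : ℕ) : Ent (shift k a) := by
  intro R hR
  have hvanish : ∀ m ∉ Set.range (fun n : ℕ => n + k), ‖Stmt8.shift k a m‖ * R ^ m = 0 := by
    intro m hm
    have : ¬ k ≤ m := by
      intro hkm
      refine hm ⟨m - k, ?_⟩
      show m - k + k = m
      omega
    simp [Stmt8.shift, this]
  rw [← Function.Injective.summable_iff (add_left_injective k) hvanish]
  refine ((ha R hR).mul_left (R ^ k)).congr fun m => ?_
  simp only [Function.comp_apply, Stmt8.shift, Nat.le_add_left, if_pos, Nat.add_sub_cancel]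
  rw [pow_add]
  ring

lemma S_shift {a : ℕ → ℂ} (ha : Ent a) (k : ℕ) (z : ℂ) :
    S (shift k a) z = z ^ k * S a z := by
  rw [S, S, ← tsum_mul_left]
  rw [← Function.Injective.tsum_eq (g := fun n : ℕ => n + k)
    (f := fun m => Stmt8.shift k a m * z ^ m) (add_left_injective k) ?_]
  · refine tsum_congr fun m => ?_
    simp only [Stmt8.shift, Nat.le_add_left, if_pos, Nat.add_sub_cancel, pow_add]
    ring
  · intro m hm
    simp only [Function.mem_support] at hm
    by_cases hkm : k ≤ m
    · exact ⟨m - k, by show m - k + k = m; omega⟩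
    · exact absurd (by simp [Stmt8.shift, hkm]) hm

lemma S_polymul {a : ℕ → ℂ} (ha : Ent a) (p : ℂ[X]) {N : ℕ} (hN : p.natDegree < N) (z : ℂ) :
    p.eval z * S a z = S (fun m => ∑ k ∈ range N, p.coeff k * Stmt8.shift k a m) z := by
  have hsummable : ∀ k ∈ range N, Summable (fun m => p.coeff k * Stmt8.shift k a m * z ^ m) := by
    intro k _
    refine (((ha.shift k).summable z).mul_left (p.coeff k)).congr fun m => by ring
  calc p.eval z * S a z = ∑ k ∈ range N, p.coeff k * z ^ k * S a z := by
        rw [eval_eq_sum_range' hN]; rw [Finset.sum_mul]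
    _ = ∑ k ∈ range N, ∑' m, p.coeff k * Stmt8.shift k a m * z ^ m := by
        refine Finset.sum_congr rfl fun k _ => ?_
        rw [mul_assoc, ← S_shift ha k z, S, ← tsum_mul_left]
        exact tsum_congr fun m => by ring
    _ = ∑' m, ∑ k ∈ range N, p.coeff k * Stmt8.shift k a m * z ^ m := (Summable.tsum_finsetSum hsummable).symm
    _ = S (fun m => ∑ k ∈ range N, p.coeff k * Stmt8.shift k a m) z := by
        rw [S]
        exact tsum_congr fun m => by rw [Finset.sum_mul]

lemma ent_sum {ι : Type*} (s : Finset ι) (f : ι → ℕ → ℂ) (hf : ∀ i ∈ s, Ent (f i)) :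
    Ent (fun m => ∑ i ∈ s, f i m) := by
  intro R hR
  refine Summable.of_nonneg_of_le (fun m => by positivity) (fun m => ?_)
    (summable_sum (fun i hi => hf i hi R hR))
  calc ‖∑ i ∈ s, f i m‖ * R ^ m ≤ (∑ i ∈ s, ‖f i m‖) * R ^ m :=
        mul_le_mul_of_nonneg_right (norm_sum_le s _) (by positivity)
    _ = ∑ i ∈ s, ‖f i m‖ * R ^ m := Finset.sum_mul _ _ _

lemma Ent.const_mul {a : ℕ → ℂ} (ha : Ent a) (x : ℂ) : Ent (fun m => x * a m) := by
  intro R hR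
  refine ((ha R hR).mul_left ‖x‖).congr fun m => ?_
  rw [norm_mul]; ring

lemma coeff_zero_of_S_zero {B : ℕ → ℂ} (hB : Ent B) (h : ∀ z, S B z = 0) :
    ∀ m, B m = 0 := by
  intro m
  set p : FormalMultilinearSeries ℂ ℂ ℂ := FormalMultilinearSeries.ofScalars ℂ B with hp
  have hcoeff : ∀ n, p.coeff n = B n := by
    intro n
    have h1 : (1 : Fin n → ℂ) = fun _ => 1 := rfl
    simp only [hp, FormalMultilinearSeries.ofScalars, FormalMultilinearSeries.coeff,
      ContinuousMultilinearMap.smul_apply, ContinuousMultilinearMap.mkPiAlgebraFin_apply,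
      smul_eq_mul]
    rw [h1, List.ofFn_const, List.prod_replicate, one_pow, mul_one]
  have hps : HasFPowerSeriesAt (fun _ : ℂ => (0 : ℂ)) p 0 := by
    rw [hasFPowerSeriesAt_iff]
    filter_upwards with z
    have := (hB.summable z).hasSum
    rw [show ∑' m, B m * z ^ m = S B z from rfl, h z] at this
    refine this.congr_fun fun n => ?_
    rw [hcoeff, smul_eq_mul]
    ring
  have hp0 : p = 0 := hps.eq_zero
  have := hcoeff m
  rw [hp0] at this
  simpa [FormalMultilinearSeries.coeff] using this.symm

lemma indep {ι : Type*} [DecidableEq ι] (s : Finset ι) (co : ι → ℂ) (f : ι → ℂ[X])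
    (hm : ∀ i ∈ s, (f i).Monic)
    (hd : ∀ i ∈ s, ∀ i' ∈ s, co i ≠ 0 → co i' ≠ 0 →
      (f i).natDegree = (f i').natDegree → i = i')
    (h : ∑ i ∈ s, Polynomial.C (co i) * f i = 0) : ∀ i ∈ s, co i = 0 := by
  classical
  by_contra hcon
  push_neg at hcon
  obtain ⟨i₁, hi₁s, hi₁⟩ := hcon
  set T := s.filter (fun i => co i ≠ 0) with hT
  have hTne : T.Nonempty := ⟨i₁, Finset.mem_filter.mpr ⟨hi₁s, hi₁⟩⟩
  obtain ⟨i₀, hi₀T, hmax⟩ := Finset.exists_max_image T (fun i => (f i).natDegree) hTne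
  have hi₀s : i₀ ∈ s := (Finset.mem_filter.mp hi₀T).1
  have hi₀ : co i₀ ≠ 0 := (Finset.mem_filter.mp hi₀T).2
  set D := (f i₀).natDegree with hD
  have hco : (∑ i ∈ s, Polynomial.C (co i) * f i).coeff D = co i₀ := by
    rw [Polynomial.finset_sum_coeff]
    rw [Finset.sum_eq_single i₀]
    · rw [Polynomial.coeff_C_mul]
      have hc1 : (f i₀).coeff D = 1 := by
        show (f i₀).coeff (f i₀).natDegree = 1
        rw [← Polynomial.leadingCoeff, (hm i₀ hi₀s).leadingCoeff]
      rw [hc1, mul_one]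
    · intro b hbs hbne
      rw [Polynomial.coeff_C_mul]
      by_cases hcb : co b = 0
      · rw [hcb, zero_mul]
      · have hbT : b ∈ T := Finset.mem_filter.mpr ⟨hbs, hcb⟩
        have hle : (f b).natDegree ≤ D := hmax b hbT
        have hne : (f b).natDegree ≠ D := fun he =>
          hbne (hd b hbs i₀ hi₀s hcb hi₀ (he.trans hD.symm ▸ he))
        rw [Polynomial.coeff_eq_zero_of_natDegree_lt (lt_of_le_of_ne hle hne), mul_zero]
    · intro hni
      exact absurd hi₀s hni
  rw [h] at hco
  simp at hco
  exact hi₀ hco.symm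

/-- the auxiliary polynomial family -/
noncomputable def F (r j k : ℕ) : ℂ[X] :=
  (X - Polynomial.C ((k / r : ℕ) : ℂ)) ^ j *
    (∏ i ∈ range (k / r), (X - Polynomial.C ((i : ℕ) : ℂ))) ^ r

lemma F_monic (r j k : ℕ) : (F r j k).Monic := by
  refine Monic.mul ((monic_X_sub_C _).pow j) (Monic.pow ?_ r)
  exact monic_prod_of_monic _ _ fun i _ => monic_X_sub_C _

lemma F_natDegree (r j k : ℕ) : (F r j k).natDegree = j + r * (k / r) := by
  have h1 : (∏ i ∈ range (k / r), (X - Polynomial.C ((i : ℕ) : ℂ))).natDegree = k / r := by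
    rw [natDegree_prod_of_monic _ _ fun i _ => monic_X_sub_C _]
    simp only [natDegree_X_sub_C]
    simp
  rw [F, Monic.natDegree_mul ((monic_X_sub_C _).pow j)
    (Monic.pow (monic_prod_of_monic _ _ fun i _ => monic_X_sub_C _) r),
    natDegree_pow, natDegree_pow, natDegree_X_sub_C, h1]
  ring

lemma F_eval (r j k : ℕ) (x : ℂ) :
    (F r j k).eval x = (x - ((k / r : ℕ) : ℂ)) ^ j *
      (∏ i ∈ range (k / r), (x - (i : ℂ))) ^ r := by
  simp [F, eval_prod]

lemma prod_cast {n t : ℕ} (h : t ≤ n) :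
    ∏ i ∈ range t, ((n : ℂ) - (i : ℂ)) = (n.descFactorial t : ℂ) := by
  rw [Nat.descFactorial_eq_prod_range, Nat.cast_prod]
  refine Finset.prod_congr rfl fun i hi => ?_
  rw [Nat.cast_sub (le_of_lt (lt_of_lt_of_le (Finset.mem_range.mp hi) h))]


lemma endgame (r N : ℕ) (hr : 1 ≤ r) (co : Fin r → ℕ → ℂ)
    (hB : ∀ m : ℕ, ∑ j : Fin r, ∑ k ∈ range N,
      co j k * shift k (fun q => (q : ℂ) ^ (j : ℕ) * c r q) m = 0) :
    ∀ (j : Fin r) (k : ℕ), k < N → co j k = 0 := by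
  intro j₀ k₀ hk₀
  set s0 := k₀ % r with hs0def
  have hs0 : s0 < r := Nat.mod_lt _ (by omega)
  set co' : Fin r × ℕ → ℂ :=
    fun p => if p.2 % r = s0 then co p.1 p.2 * (r : ℂ) ^ (p.1 : ℕ) else 0 with hco'
  set Q : ℂ[X] := ∑ p ∈ Finset.univ ×ˢ range N, Polynomial.C (co' p) * F r p.1 p.2 with hQ
  -- key term computation
  have keyterm : ∀ n : ℕ, N ≤ n → ∀ (j : Fin r) (k : ℕ), k < N →
      co' (j, k) * (F r (j : ℕ) k).eval (n : ℂ)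
        = (n.factorial : ℂ) ^ r *
          (co j k * shift k (fun q => (q : ℂ) ^ (j : ℕ) * c r q) (s0 + r * n)) := by
    intro n hn j k hk
    have hkm : k ≤ s0 + r * n := by
      have : n ≤ r * n := Nat.le_mul_of_pos_left n (by omega)
      omega
    rw [shift, if_pos hkm]
    by_cases hks : k % r = s0
    · -- main case
      set t := k / r with ht
      have hkt : r * t + s0 = k := by rw [← hks, ht]; exact Nat.div_add_mod k r
      have htn : t ≤ n := le_trans (le_trans (Nat.div_le_self k r) (le_of_lt hk)) hn
      have hmul1 : r * t + r * (n - t) = r * n := by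
        rw [← Nat.mul_add, Nat.add_sub_cancel' htn]
      have hmk : s0 + r * n - k = r * (n - t) := by omega
      have hdvd : r ∣ s0 + r * n - k := ⟨n - t, hmk⟩
      have hquot : (s0 + r * n - k) / r = n - t := by
        rw [hmk]; exact Nat.mul_div_cancel_left _ (by omega)
      have hc : c r (s0 + r * n - k) = 1 / (((n - t).factorial : ℂ)) ^ r := by
        rw [c, if_pos hdvd, hquot]
      have hcast : ((s0 + r * n - k : ℕ) : ℂ) = (r : ℂ) * ((n : ℂ) - (t : ℂ)) := by
        rw [hmk]
        push_cast [Nat.cast_sub htn]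
        ring
      have hfact : (n.factorial : ℂ) = ((n - t).factorial : ℂ) * (n.descFactorial t : ℂ) := by
        exact_mod_cast congrArg (Nat.cast (R := ℂ)) (Nat.factorial_mul_descFactorial htn).symm
      have hfne : (((n - t).factorial : ℂ)) ≠ 0 := Nat.cast_ne_zero.mpr (Nat.factorial_ne_zero _)
      rw [hco']
      simp only [if_pos hks]
      rw [F_eval, ← ht, prod_cast htn, hc, hcast, hfact]
      field_simp
      simp only [mul_pow]
      ring
    · -- vanishing case
      have hndvd : ¬ r ∣ s0 + r * n - k := by
        rintro ⟨q, hq⟩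
        have hqn : q ≤ n := by
          have h1 : r * q ≤ s0 + r * n := by omega
          have h2 : s0 + r * n < r * (n + 1) + r * n - r * n := by
            have := Nat.mul_add r n 1
            omega
          by_contra hcon
          have h3 : n + 1 ≤ q := by omega
          have h4 : r * (n + 1) ≤ r * q := Nat.mul_le_mul_left r h3
          have := Nat.mul_add r n 1
          omega
        have hmulsplit : r * q + r * (n - q) = r * n := by
          rw [← Nat.mul_add, Nat.add_sub_cancel' hqn]
        have hkval : k = s0 + r * (n - q) := by omega
        apply hks
        rw [hkval, Nat.add_mul_mod_self_left, Nat.mod_eq_of_lt hs0]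
      have hc0 : c r (s0 + r * n - k) = 0 := by rw [c, if_neg hndvd]
      rw [hco']
      simp only [if_neg hks]
      rw [hc0]
      ring
  -- Q vanishes at all large naturals
  have hroot : ∀ n : ℕ, N ≤ n → Q.eval (n : ℂ) = 0 := by
    intro n hn
    have hBn := hB (s0 + r * n)
    rw [hQ, Polynomial.eval_finset_sum]
    calc ∑ p ∈ Finset.univ ×ˢ range N, (Polynomial.C (co' p) * F r p.1 p.2).eval (n : ℂ)
        = ∑ j : Fin r, ∑ k ∈ range N, (n.factorial : ℂ) ^ r *
            (co j k * shift k (fun q => (q : ℂ) ^ (j : ℕ) * c r q) (s0 + r * n)) := by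
          rw [Finset.sum_product]
          refine Finset.sum_congr rfl fun j _ => Finset.sum_congr rfl fun k hkmem => ?_
          rw [Polynomial.eval_mul, Polynomial.eval_C]
          exact keyterm n hn j k (Finset.mem_range.mp hkmem)
      _ = (n.factorial : ℂ) ^ r * ∑ j : Fin r, ∑ k ∈ range N,
            co j k * shift k (fun q => (q : ℂ) ^ (j : ℕ) * c r q) (s0 + r * n) := by
          rw [Finset.mul_sum]
          exact Finset.sum_congr rfl fun j _ => (Finset.mul_sum _ _ _).symm
      _ = 0 := by rw [hBn, mul_zero]
  have hQ0 : Q = 0 := by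
    refine Polynomial.eq_zero_of_infinite_isRoot _ ?_
    have himg : ((fun n : ℕ => (n : ℂ)) '' Set.Ici N).Infinite :=
      Set.Infinite.image (fun a _ b _ hab => Nat.cast_injective hab) (Set.Ici_infinite (N : ℕ))
    refine Set.Infinite.mono ?_ himg
    rintro x ⟨n, hn, rfl⟩
    exact hroot n hn
  have hall := indep (Finset.univ ×ˢ range N) co' (fun p => F r p.1 p.2)
    (fun p _ => F_monic r p.1 p.2)
    (fun p hp p' hp' hne hne' hdeg => ?_)
    (by rw [← hQ, hQ0]) (j₀, k₀)
    (Finset.mem_product.mpr ⟨Finset.mem_univ _, Finset.mem_range.mpr hk₀⟩)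
  · rw [hco'] at hall
    dsimp only at hall
    rw [if_pos hs0def.symm] at hall
    have hrne : ((r : ℂ)) ^ (j₀ : ℕ) ≠ 0 := pow_ne_zero _ (Nat.cast_ne_zero.mpr (by omega))
    exact (mul_eq_zero.mp hall).resolve_right hrne
  · -- injectivity of degrees
    have hs1 : p.2 % r = s0 := by
      by_contra hcon
      exact hne (by rw [hco']; simp only [if_neg hcon])
    have hs2 : p'.2 % r = s0 := by
      by_contra hcon
      exact hne' (by rw [hco']; simp only [if_neg hcon])
    rw [F_natDegree, F_natDegree] at hdeg
    have hj1 : ((p.1 : ℕ)) = ((p.1 : ℕ) + r * (p.2 / r)) % r := by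
      rw [Nat.add_mul_mod_self_left, Nat.mod_eq_of_lt p.1.isLt]
    have hj2 : ((p'.1 : ℕ)) = ((p'.1 : ℕ) + r * (p'.2 / r)) % r := by
      rw [Nat.add_mul_mod_self_left, Nat.mod_eq_of_lt p'.1.isLt]
    have hjeq : (p.1 : ℕ) = (p'.1 : ℕ) := by rw [hj1, hj2, hdeg]
    have hdiv : p.2 / r = p'.2 / r := by
      have h1 : r * (p.2 / r) = r * (p'.2 / r) := by omega
      exact Nat.eq_of_mul_eq_mul_left (by omega) h1
    have hk2 : p.2 = p'.2 := by
      have e1 := Nat.div_add_mod p.2 r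
      have e2 := Nat.div_add_mod p'.2 r
      omega
    exact Prod.ext (Fin.ext hjeq) hk2


lemma S_sum {ι : Type*} (s : Finset ι) (f : ι → ℕ → ℂ) (hf : ∀ i ∈ s, Ent (f i)) (z : ℂ) :
    ∑ i ∈ s, S (f i) z = S (fun m => ∑ i ∈ s, f i m) z := by
  rw [S]
  calc ∑ i ∈ s, S (f i) z = ∑ i ∈ s, ∑' m, f i m * z ^ m := rfl
    _ = ∑' m, ∑ i ∈ s, f i m * z ^ m := (Summable.tsum_finsetSum fun i hi => (hf i hi).summable z).symm
    _ = ∑' m, (∑ i ∈ s, f i m) * z ^ m := tsum_congr fun m => (Finset.sum_mul _ _ _).symm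

end Stmt8

open Stmt8 in
/-- The functions `E_j = ϑ^j E`, `0 ≤ j ≤ r-1`, where `E(z) = ∑ z^{rn}/(n!)^r` and `ϑ = z d/dz`,
are linearly independent over `ℂ(z)`: if polynomials `p_j` satisfy `∑_j p_j(z) E_j(z) = 0`
identically, then all `p_j = 0`. -/
theorem stmt_8 (r : ℕ) (hr : 1 ≤ r) (P : Fin r → Polynomial ℂ)
    (h : ∀ z : ℂ, ∑ j : Fin r, (P j).eval z *
        ((fun f : ℂ → ℂ => fun w => w * deriv f w)^[(j : ℕ)]
          (fun w : ℂ => ∑' n : ℕ, w ^ (r * n) / (n.factorial : ℂ) ^ r)) z = 0) :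
    ∀ j : Fin r, P j = 0 := by
  intro j
  set N : ℕ := (Finset.univ.sup fun i : Fin r => (P i).natDegree) + 1 with hNdef
  have hNdeg : ∀ i : Fin r, (P i).natDegree < N :=
    fun i => Nat.lt_succ_of_le (Finset.le_sup (f := fun i : Fin r => (P i).natDegree) (Finset.mem_univ i))
  have hEnt : ∀ i : Fin r, Ent (fun m => ∑ k ∈ Finset.range N,
      (P i).coeff k * Stmt8.shift k (fun q => (q : ℂ) ^ (i : ℕ) * c r q) m) :=
    fun i => ent_sum _ _ fun k _ => (((ent_c hr).pow_mul _).shift k).const_mul _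
  have key : ∀ m : ℕ, ∑ i : Fin r, ∑ k ∈ Finset.range N,
      (P i).coeff k * Stmt8.shift k (fun q => (q : ℂ) ^ (i : ℕ) * c r q) m = 0 := by
    have := coeff_zero_of_S_zero (B := fun m => ∑ i : Fin r, ∑ k ∈ Finset.range N,
        (P i).coeff k * Stmt8.shift k (fun q => (q : ℂ) ^ (i : ℕ) * c r q) m)
      (ent_sum _ _ fun i _ => hEnt i) ?_
    · exact this
    · intro z
      rw [← S_sum _ _ (fun i _ => hEnt i) z, ← h z]
      refine Finset.sum_congr rfl fun i _ => ?_
      rw [base_eq r hr, theta_iter_S (ent_c hr) (i : ℕ),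
        ← S_polymul ((ent_c hr).pow_mul (i : ℕ)) (P i) (hNdeg i) z]
  have hend := endgame r N hr (fun i k => (P i).coeff k) key
  ext k
  simp only [coeff_zero]
  by_cases hk : k < N
  · exact hend j k hk
  · exact Polynomial.coeff_eq_zero_of_natDegree_lt (lt_of_lt_of_le (hNdeg j) (le_of_not_gt hk))
end

section
/- The Gregory polynomials defined by the generating function t(1+t)^x / log(1+t) = Σ_{n=0}^∞ G_n(x) t^n satisfy G_n(x) = ∫_x^{x+1} C(u, n) du for all n ≥ 0, where C(u,n) = u(u−1)···(u−n+1)/n! is the generalized binomial coefficient polynomial. -/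
noncomputable def gregC (u : ℝ) (n : ℕ) : ℝ := (∏ i ∈ Finset.range n, (u - (i:ℝ))) / (n.factorial : ℝ)

lemma gregC_zero (u : ℝ) : gregC u 0 = 1 := by simp [gregC]

lemma gregC_succ (u : ℝ) (n : ℕ) :
    gregC u (n + 1) = gregC u n * (u - n) / (n + 1) := by
  have h1 : ((n.factorial : ℝ)) ≠ 0 := by positivity
  have h2 : ((n:ℝ) + 1) ≠ 0 := by positivity
  rw [gregC, gregC, Finset.prod_range_succ, Nat.factorial_succ]
  push_cast
  rw [div_mul_eq_mul_div, div_div, div_eq_div_iff (by positivity) (by positivity)]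
  ring

lemma abs_gregC_le (u : ℝ) (m : ℕ) (hu : |u| ≤ m) (n : ℕ) :
    |gregC u n| ≤ ((n : ℝ) + 1) ^ m := by
  induction n with
  | zero => simp [gregC_zero]
  | succ n ih =>
    have h2 : (0:ℝ) < (n:ℝ) + 1 := by positivity
    have habs : |u - n| ≤ (m : ℝ) + n := by
      have hn : |(n:ℝ)| = (n:ℝ) := abs_of_nonneg (by positivity)
      calc |u - n| ≤ |u| + |(n:ℝ)| := abs_sub u ((n:ℝ))
        _ ≤ (m : ℝ) + n := by rw [hn]; linarith
    have hpos : (0:ℝ) ≤ 1/((n:ℝ)+1) := by positivity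
    have hb : (1 : ℝ) + m * (1 / ((n:ℝ)+1)) ≤ (1 + 1/((n:ℝ)+1)) ^ m :=
      one_add_mul_le_pow (by linarith) m
    have e1 : ((n:ℝ)+2)^m = ((n:ℝ)+1)^m * (1 + 1/((n:ℝ)+1))^m := by
      rw [← mul_pow]; congr 1; field_simp; ring
    have key : ((n:ℝ) + 1) ^ m * (((m:ℝ) + n) / ((n:ℝ) + 1)) ≤ ((n:ℝ) + 2) ^ m := by
      calc ((n:ℝ)+1)^m * (((m:ℝ)+n)/((n:ℝ)+1)) ≤ ((n:ℝ)+1)^m * (1 + m * (1/((n:ℝ)+1))) := by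
            gcongr
            rw [div_le_iff₀ h2]
            have : ((1:ℝ) + m*(1/((n:ℝ)+1)))*((n:ℝ)+1) = (n:ℝ)+1+m := by field_simp
            rw [this]; linarith
        _ ≤ ((n:ℝ)+1)^m * (1 + 1/((n:ℝ)+1))^m := by gcongr ((n:ℝ)+1)^m * ?_
        _ = ((n:ℝ)+2)^m := e1.symm
    have step1 : |gregC u (n+1)| ≤ ((n:ℝ)+1)^m * (((m:ℝ)+n)/((n:ℝ)+1)) := by
      rw [gregC_succ, abs_div, abs_mul, abs_of_pos h2]
      have e2 : ((n:ℝ)+1)^m * (((m:ℝ)+n)/((n:ℝ)+1)) = (((n:ℝ)+1)^m * ((m:ℝ)+n))/((n:ℝ)+1) := by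
        ring
      rw [e2]
      gcongr
    calc |gregC u (n+1)| ≤ ((n:ℝ)+1)^m * (((m:ℝ)+n)/((n:ℝ)+1)) := step1
      _ ≤ ((n:ℝ)+2)^m := key
      _ = (((n+1:ℕ):ℝ)+1)^m := by push_cast; ring_nf

lemma summable_geom_aux (m : ℕ) {r : ℝ} (h0 : 0 ≤ r) (h1 : r < 1) :
    Summable (fun n : ℕ => ((n:ℝ)+2)^m * r^n) := by
  rcases eq_or_lt_of_le h0 with h|h
  · apply summable_of_ne_finset_zero (s := {0})
    intro n hn
    simp only [Finset.mem_singleton] at hn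
    rw [← h, zero_pow hn, mul_zero]
  · have hs : Summable (fun j : ℕ => (j:ℝ)^m * r^j) :=
      summable_pow_mul_geometric_of_norm_lt_one m (by rwa [Real.norm_eq_abs, abs_of_nonneg h0])
    have hs2 : Summable (fun n : ℕ => ((n+2:ℕ):ℝ)^m * r^(n+2)) := (summable_nat_add_iff 2).mpr hs
    have hr2 : (r^2) ≠ 0 := by positivity
    refine ((hs2.mul_left (r^2)⁻¹).congr ?_)
    intro n
    push_cast
    field_simp
    ring

open MeasureTheory intervalIntegral Filter Topology
open scoped ENNReal NNReal

theorem gregC_hasSum (u : ℝ) {y : ℝ} (hy : |y| < 1) :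
    HasSum (fun n => gregC u n * y ^ n) ((1 + y) ^ u) := by
  set m := ⌈|u|⌉₊ with hmdef
  have hum : |u| ≤ m := Nat.le_ceil _
  set r : ℝ := (|y| + 1) / 2 with hrdef
  have hy0 : 0 ≤ |y| := abs_nonneg y
  have hr0 : 0 < r := by rw [hrdef]; linarith
  have hr1 : r < 1 := by rw [hrdef]; linarith
  have hyr : |y| < r := by rw [hrdef]; linarith
  have hrhalf : 1/2 ≤ r := by rw [hrdef]; linarith
  have hSummandBound : ∀ (n : ℕ) (z : ℝ), |z| ≤ r → |gregC u n * z ^ n| ≤ ((n:ℝ)+2)^m * r^n := by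
    intro n z hz
    rw [abs_mul, abs_pow]
    have h1 : |gregC u n| ≤ ((n:ℝ)+1)^m := abs_gregC_le u m hum n
    have h2 : ((n:ℝ)+1)^m ≤ ((n:ℝ)+2)^m := by gcongr <;> linarith [Nat.cast_nonneg (α := ℝ) n]
    have h3 : |z|^n ≤ r^n := pow_le_pow_left₀ (abs_nonneg z) hz n
    exact mul_le_mul (h1.trans h2) h3 (by positivity) (by positivity)
  have hSum_on : ∀ z : ℝ, |z| ≤ r → Summable (fun n => gregC u n * z ^ n) := by
    intro z hz
    exact Summable.of_norm_bounded (summable_geom_aux m hr0.le hr1)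
      (fun n => by rw [Real.norm_eq_abs]; exact hSummandBound n z hz)
  set D : ℕ → ℝ → ℝ := fun n z => gregC u n * ((n:ℝ) * z^(n-1)) with hDdef
  set U : ℕ → ℝ := fun n => 2 * ((n:ℝ)+2)^(m+1) * r^n with hUdef
  have hU : Summable U := by
    have := (summable_geom_aux (m+1) hr0.le hr1).mul_left 2
    exact this.congr (fun n => by rw [hUdef]; ring)
  have hD_bound : ∀ (n : ℕ) (z : ℝ), |z| ≤ r → ‖D n z‖ ≤ U n := by
    intro n z hz
    cases n with
    | zero =>
      have : D 0 z = 0 := by simp [hDdef]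
      rw [this, norm_zero, hUdef]
      positivity
    | succ k =>
      have hrk : r ^ k ≤ 2 * r^(k+1) := by
        have h' : r ^ k * 1 ≤ r ^ k * (2 * r) :=
          mul_le_mul_of_nonneg_left (by linarith) (by positivity)
        calc r ^ k = r ^ k * 1 := by ring
          _ ≤ r ^ k * (2 * r) := h'
          _ = 2 * r^(k+1) := by ring
      have h1 : |gregC u (k+1)| ≤ ((k:ℝ)+2)^m := by
        have h' := abs_gregC_le u m hum (k+1)
        calc |gregC u (k+1)| ≤ (((k+1:ℕ):ℝ)+1)^m := h'
          _ = ((k:ℝ)+2)^m := by push_cast; ring_nf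
      have hzk : |z|^k ≤ r^k := pow_le_pow_left₀ (abs_nonneg z) hz k
      have hnn : (0:ℝ) ≤ (k:ℝ)+1 := by positivity
      calc ‖D (k+1) z‖ = |gregC u (k+1)| * (((k:ℝ)+1) * |z|^k) := by
            rw [hDdef]
            simp only [Real.norm_eq_abs, Nat.add_sub_cancel, abs_mul, abs_pow, Nat.abs_cast]
            push_cast
            ring
        _ ≤ ((k:ℝ)+2)^m * (((k:ℝ)+1) * r^k) := by gcongr
        _ ≤ ((k:ℝ)+2)^m * (((k:ℝ)+1) * (2 * r^(k+1))) := by gcongr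
        _ ≤ (((k:ℝ)+3)^m * ((k:ℝ)+3)) * (2 * r^(k+1)) := by
            have e1 : ((k:ℝ)+2)^m ≤ ((k:ℝ)+3)^m := by
              gcongr <;> linarith [Nat.cast_nonneg (α := ℝ) k]
            calc ((k:ℝ)+2)^m * (((k:ℝ)+1) * (2 * r^(k+1)))
                = (((k:ℝ)+2)^m * ((k:ℝ)+1)) * (2 * r^(k+1)) := by ring
              _ ≤ (((k:ℝ)+3)^m * ((k:ℝ)+3)) * (2 * r^(k+1)) := by
                  have : ((k:ℝ)+2)^m * ((k:ℝ)+1) ≤ ((k:ℝ)+3)^m * ((k:ℝ)+3) :=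
                    mul_le_mul e1 (by linarith) hnn (by positivity)
                  exact mul_le_mul_of_nonneg_right this (by positivity)
        _ = U (k+1) := by rw [hUdef]; push_cast; rw [pow_succ]; ring
  set t : Set ℝ := Metric.ball (0:ℝ) r with htdef
  have hmem : ∀ z : ℝ, z ∈ t ↔ |z| < r := by
    intro z; rw [htdef, Metric.mem_ball, Real.dist_eq, sub_zero]
  have h0t : (0:ℝ) ∈ t := (hmem 0).mpr (by simpa using hr0)
  have hderiv : ∀ (n : ℕ) (z : ℝ), z ∈ t → HasDerivAt (fun w => gregC u n * w ^ n) (D n z) z :=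
    fun n z _ => (hasDerivAt_pow n z).const_mul (gregC u n)
  have hS0sum : Summable (fun n => gregC u n * (0:ℝ)^n) := hSum_on 0 (by simpa using hr0.le)
  set S : ℝ → ℝ := fun z => ∑' n, gregC u n * z^n with hSdef
  have hSder : ∀ z ∈ t, HasDerivAt S (∑' n, D n z) z := by
    intro z hz
    exact hasDerivAt_tsum_of_isPreconnected hU Metric.isOpen_ball
      (convex_ball (0:ℝ) r).isPreconnected hderiv
      (fun n w hw => hD_bound n w ((hmem w).mp hw).le) h0t hS0sum hz
  have hDsum : ∀ z : ℝ, |z| ≤ r → Summable (fun n => D n z) :=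
    fun z hz => Summable.of_norm_bounded hU (fun n => hD_bound n z hz)
  have hODE : ∀ z ∈ t, (1+z) * (∑' n, D n z) = u * S z := by
    intro z hz
    have hzr : |z| < r := (hmem z).mp hz
    have hA : Summable (fun n => D n z) := hDsum z hzr.le
    have hB : Summable (fun n => gregC u n * z^n) := hSum_on z hzr.le
    have step2 : ∀ n : ℕ, D (n+1) z = u * (gregC u n * z^n) - z * D n z := by
      intro n
      have h1 : ((n:ℝ)+1) ≠ 0 := by positivity
      have e1 : D (n+1) z = gregC u n * (u - n) * z^n := by
        rw [hDdef]
        simp only [Nat.add_sub_cancel]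
        rw [gregC_succ]
        push_cast
        field_simp
      rw [e1]
      cases n with
      | zero => simp [hDdef]; ring
      | succ k =>
        rw [hDdef]
        simp only [Nat.add_sub_cancel]
        push_cast
        rw [pow_succ]
        ring
    have step1 : (∑' n, D n z) = u * S z - z * (∑' n, D n z) := by
      conv_lhs => rw [hA.tsum_eq_zero_add]
      have hD0 : D 0 z = 0 := by simp [hDdef]
      rw [hD0, zero_add]
      calc (∑' n, D (n+1) z) = ∑' n, (u * (gregC u n * z^n) - z * D n z) := tsum_congr step2
        _ = (∑' n, u * (gregC u n * z^n)) - ∑' n, z * D n z :=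
            Summable.tsum_sub (hB.mul_left u) (hA.mul_left z)
        _ = u * S z - z * (∑' n, D n z) := by rw [tsum_mul_left, tsum_mul_left]
    linarith [step1]
  set φ : ℝ → ℝ := fun z => S z * (1+z) ^ (-u) with hφdef
  have h1z : ∀ z ∈ t, (0:ℝ) < 1 + z := by
    intro z hz
    have := abs_lt.mp ((hmem z).mp hz)
    linarith
  have hφ : ∀ z ∈ t, HasDerivAt φ 0 z := by
    intro z hz
    have hpos := h1z z hz
    have inner : HasDerivAt (fun w : ℝ => 1 + w) 1 z := by
      simpa using (hasDerivAt_id z).const_add (1:ℝ)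
    have outer : HasDerivAt (fun x : ℝ => x ^ (-u)) (-u * (1+z)^(-u-1)) (1+z) :=
      Real.hasDerivAt_rpow_const (Or.inl hpos.ne')
    have comp : HasDerivAt (fun w : ℝ => (1+w)^(-u)) (-u * (1+z)^(-u-1)) z := by
      have := outer.comp z inner; rw [mul_one] at this; exact this
    have prod := (hSder z hz).mul comp
    have hval : (∑' n, D n z) * (1+z)^(-u) + S z * (-u * (1+z)^(-u-1)) = 0 := by
      have e : (1+z)^(-u) = (1+z) * (1+z)^(-u-1) := by
        have e' := Real.rpow_add hpos 1 (-u-1)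
        rw [Real.rpow_one] at e'
        rw [show (1:ℝ) + (-u-1) = -u by ring] at e'
        exact e'
      rw [e]
      linear_combination (1+z)^(-u-1) * hODE z hz
    rw [hval] at prod
    exact prod
  have hconst : ∀ z ∈ t, φ z = φ 0 := by
    intro z hz
    have hzr : |z| < r := (hmem z).mp hz
    have habs := abs_lt.mp hzr
    rcases le_or_gt 0 z with hz0 | hz0
    · have hIcc : Set.Icc (0:ℝ) z ⊆ t := by
        intro w hw
        rw [hmem, abs_lt]
        exact ⟨by linarith [hw.1], by linarith [hw.2, habs.2]⟩
      have := constant_of_has_deriv_right_zero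
        (f := φ) (a := 0) (b := z)
        (fun w hw => ((hφ w (hIcc hw)).continuousAt).continuousWithinAt)
        (fun w hw => (hφ w (hIcc (Set.Ico_subset_Icc_self hw))).hasDerivWithinAt)
      exact this z (Set.mem_Icc.mpr ⟨hz0, le_refl z⟩)
    · have hIcc : Set.Icc z (0:ℝ) ⊆ t := by
        intro w hw
        rw [hmem, abs_lt]
        exact ⟨by linarith [hw.1, habs.1], by linarith [hw.2, hr0]⟩
      have := constant_of_has_deriv_right_zero
        (f := φ) (a := z) (b := 0)
        (fun w hw => ((hφ w (hIcc hw)).continuousAt).continuousWithinAt)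
        (fun w hw => (hφ w (hIcc (Set.Ico_subset_Icc_self hw))).hasDerivWithinAt)
      exact (this 0 (Set.mem_Icc.mpr ⟨hz0.le, le_refl 0⟩)).symm
  have hyt : y ∈ t := (hmem y).mpr hyr
  have hpos : (0:ℝ) < 1 + y := h1z y hyt
  have hS0' : S 0 = 1 := by
    have h' : (∑' n, gregC u n * (0:ℝ)^n) = gregC u 0 * (0:ℝ)^0 :=
      tsum_eq_single 0 (fun n hn => by rw [zero_pow hn, mul_zero])
    rw [hSdef]
    simpa [gregC_zero] using h'
  have hφy : S y * (1+y)^(-u) = S 0 * ((1:ℝ)+0)^(-u) := hconst y hyt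
  rw [hS0', add_zero, Real.one_rpow, one_mul] at hφy
  have hne : ((1+y):ℝ) ^ u ≠ 0 := (Real.rpow_pos_of_pos hpos u).ne'
  have hSy : S y = (1+y)^u := by
    rw [Real.rpow_neg hpos.le] at hφy
    field_simp at hφy
    linarith [hφy]
  have hsum := (hSum_on y hyr.le).hasSum
  have hSy' : (∑' n, gregC u n * y ^ n) = (1+y)^u := hSy
  rwa [hSy'] at hsum

lemma gregC_cont (n : ℕ) : Continuous (fun u : ℝ => gregC u n) := by
  unfold gregC
  exact (continuous_finset_prod _ (fun i _ => by fun_prop)).div_const _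

lemma gregC_integral_hasSum (x : ℝ) {y : ℝ} (hy : |y| < 1) :
    HasSum (fun n => (∫ u in x..(x+1), gregC u n) * y ^ n)
      (∫ u in x..(x+1), (1+y)^u) := by
  set m := ⌈|x|⌉₊ + 1 with hm
  have hxle : x ≤ x + 1 := by linarith
  have hbound : ∀ u : ℝ, u ∈ Set.Icc x (x+1) → |u| ≤ (m:ℝ) := by
    intro u hu
    have h1 : |x| ≤ (⌈|x|⌉₊:ℝ) := Nat.le_ceil _
    rw [abs_le]
    rw [hm]
    push_cast
    constructor
    · linarith [neg_abs_le x, hu.1]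
    · linarith [le_abs_self x, hu.2]
  have hgb : ∀ (n : ℕ) (u : ℝ), u ∈ Set.Icc x (x+1) → |gregC u n| ≤ ((n:ℝ)+2)^m := by
    intro n u hu
    have h1 := abs_gregC_le u m (hbound u hu) n
    have h2 : ((n:ℝ)+1)^m ≤ ((n:ℝ)+2)^m := by gcongr <;> linarith [Nat.cast_nonneg (α := ℝ) n]
    exact h1.trans h2
  have hBsum : Summable (fun n : ℕ => ((n:ℝ)+2)^m * |y|^n) := summable_geom_aux m (abs_nonneg y) hy
  have hcont : ∀ n : ℕ, Continuous (fun u : ℝ => gregC u n * y^n) :=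
    fun n => (gregC_cont n).mul continuous_const
  have key : (∫ u in Set.Ioc x (x+1), ∑' n, gregC u n * y^n) =
      ∑' n, ∫ u in Set.Ioc x (x+1), gregC u n * y^n := by
    apply MeasureTheory.integral_tsum
    · intro n; exact (hcont n).aestronglyMeasurable
    · have hle : ∀ n : ℕ, (∫⁻ u in Set.Ioc x (x+1), ‖gregC u n * y^n‖ₑ) ≤
          ENNReal.ofReal (((n:ℝ)+2)^m * |y|^n) := by
        intro n
        have hptle : ∀ u ∈ Set.Ioc x (x+1), ‖gregC u n * y^n‖ₑ ≤
            ENNReal.ofReal (((n:ℝ)+2)^m * |y|^n) := by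
          intro u hu
          rw [Real.enorm_eq_ofReal_abs]
          apply ENNReal.ofReal_le_ofReal
          rw [abs_mul, abs_pow]
          have := hgb n u (Set.Ioc_subset_Icc_self hu)
          have h3 : |y|^n ≤ |y|^n := le_refl _
          exact mul_le_mul this h3 (by positivity) (by positivity)
        calc (∫⁻ u in Set.Ioc x (x+1), ‖gregC u n * y^n‖ₑ) ≤
            ∫⁻ _ in Set.Ioc x (x+1), ENNReal.ofReal (((n:ℝ)+2)^m * |y|^n) :=
              MeasureTheory.setLIntegral_mono measurable_const hptle
          _ = ENNReal.ofReal (((n:ℝ)+2)^m * |y|^n) * MeasureTheory.volume (Set.Ioc x (x+1)) :=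
              MeasureTheory.setLIntegral_const _ _
          _ = ENNReal.ofReal (((n:ℝ)+2)^m * |y|^n) := by
              rw [Real.volume_Ioc, add_sub_cancel_left, ENNReal.ofReal_one, mul_one]
      apply ne_of_lt
      calc (∑' n, ∫⁻ u in Set.Ioc x (x+1), ‖gregC u n * y^n‖ₑ) ≤
          ∑' n : ℕ, ENNReal.ofReal (((n:ℝ)+2)^m * |y|^n) := ENNReal.tsum_le_tsum hle
        _ = ENNReal.ofReal (∑' n : ℕ, ((n:ℝ)+2)^m * |y|^n) :=
            (ENNReal.ofReal_tsum_of_nonneg (fun n => by positivity) hBsum).symm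
        _ < ⊤ := ENNReal.ofReal_lt_top
  have e1 : ∀ n : ℕ, (∫ u in x..(x+1), gregC u n) * y^n =
      ∫ u in Set.Ioc x (x+1), gregC u n * y^n := by
    intro n
    rw [intervalIntegral.integral_of_le hxle, ← MeasureTheory.integral_mul_const]
  have e2 : (∫ u in x..(x+1), (1+y)^u) = ∫ u in Set.Ioc x (x+1), ∑' n, gregC u n * y^n := by
    rw [intervalIntegral.integral_of_le hxle]
    apply MeasureTheory.setIntegral_congr_fun measurableSet_Ioc
    intro u _
    exact ((gregC_hasSum u hy).tsum_eq).symm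
  have hsumm : Summable (fun n => (∫ u in x..(x+1), gregC u n) * y^n) := by
    apply Summable.of_norm_bounded hBsum
    intro n
    rw [Real.norm_eq_abs, abs_mul, abs_pow]
    have hint : |∫ u in x..(x+1), gregC u n| ≤ ((n:ℝ)+2)^m := by
      have h' := intervalIntegral.norm_integral_le_of_norm_le_const (C := ((n:ℝ)+2)^m)
        (f := fun u => gregC u n) (a := x) (b := x+1) ?_
      · rw [Real.norm_eq_abs] at h'
        simpa using h'
      · intro u hu
        rw [Set.uIoc_of_le hxle] at hu
        rw [Real.norm_eq_abs]
        exact hgb n u (Set.Ioc_subset_Icc_self hu)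
    exact mul_le_mul hint (le_refl _) (by positivity) (by positivity)
  have e3 : (∑' n, (∫ u in x..(x+1), gregC u n) * y^n) = ∫ u in x..(x+1), (1+y)^u := by
    rw [tsum_congr e1, ← key, ← e2]
  have h := hsumm.hasSum
  rwa [e3] at h

lemma integral_rpow_eval (x : ℝ) {y : ℝ} (hy0 : y ≠ 0) (hy : |y| < 1) :
    (∫ u in x..(x+1), (1+y)^u) = y * (1+y)^x / Real.log (1+y) := by
  have habs := abs_lt.mp hy
  have hpos : (0:ℝ) < 1 + y := by linarith
  set L := Real.log (1+y) with hL
  have hLne : L ≠ 0 := by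
    rcases lt_or_gt_of_ne hy0 with h | h
    · have : L < 0 := Real.log_neg (by linarith) (by linarith)
      exact this.ne
    · have : 0 < L := Real.log_pos (by linarith)
      exact this.ne'
  have e1 : ∀ u : ℝ, (1+y)^u = Real.exp (L * u) := by
    intro u
    rw [Real.rpow_def_of_pos hpos]
  rw [intervalIntegral.integral_congr (fun u _ => e1 u)]
  rw [intervalIntegral.integral_comp_mul_left (fun w => Real.exp w) hLne]
  rw [_root_.integral_exp, smul_eq_mul]
  have e2 : Real.exp (L*(x+1)) = Real.exp (L*x) * (1+y) := by
    rw [mul_add, mul_one, Real.exp_add, Real.exp_log hpos]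
  have e3 : Real.exp (L*x) = (1+y)^x := (e1 x).symm
  rw [e2, e3]
  field_simp
  ring

lemma abs_integral_gregC_le (x : ℝ) (n : ℕ) :
    |∫ u in x..(x+1), gregC u n| ≤ ((n:ℝ)+2)^(⌈|x|⌉₊+1) := by
  set m := ⌈|x|⌉₊ + 1 with hm
  have hxle : x ≤ x + 1 := by linarith
  have hbound : ∀ u : ℝ, u ∈ Set.Icc x (x+1) → |u| ≤ (m:ℝ) := by
    intro u hu
    have h1 : |x| ≤ (⌈|x|⌉₊:ℝ) := Nat.le_ceil _
    rw [abs_le, hm]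
    push_cast
    exact ⟨by linarith [neg_abs_le x, hu.1], by linarith [le_abs_self x, hu.2]⟩
  have h' := intervalIntegral.norm_integral_le_of_norm_le_const (C := ((n:ℝ)+2)^m)
    (f := fun u => gregC u n) (a := x) (b := x+1) ?_
  · rw [Real.norm_eq_abs] at h'
    simpa using h'
  · intro u hu
    rw [Set.uIoc_of_le hxle] at hu
    rw [Real.norm_eq_abs]
    have h1 := abs_gregC_le u m (hbound u (Set.Ioc_subset_Icc_self hu)) n
    have h2 : ((n:ℝ)+1)^m ≤ ((n:ℝ)+2)^m := by gcongr <;> linarith [Nat.cast_nonneg (α := ℝ) n]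
    exact h1.trans h2

/-- The Gregory polynomials, defined by `t(1+t)^x / log(1+t) = ∑_n G_n(x) t^n` for
`0 < |t| < 1`, satisfy `G_n(x) = ∫_x^{x+1} C(u, n) du`. -/
theorem stmt_10 (G : ℕ → ℝ → ℝ)
    (hG : ∀ x t : ℝ, 0 < |t| → |t| < 1 →
      t * (1 + t) ^ x / Real.log (1 + t) = ∑' n : ℕ, G n x * t ^ n)
    (n : ℕ) (x : ℝ) :
    G n x = ∫ u in x..(x + 1), (∏ i ∈ Finset.range n, (u - (i : ℝ))) / (n.factorial : ℝ) := by
  classical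
  -- Summability of the G-series at 3/4
  have hq0 : (0:ℝ) < |(3/4 : ℝ)| := by norm_num
  have hq1 : |(3/4 : ℝ)| < 1 := by rw [abs_of_pos (by norm_num)]; norm_num
  have hhalfsum : Summable (fun n => G n x * (3/4:ℝ)^n) := by
    by_contra hns
    have h0 := hG x (3/4) hq0 hq1
    rw [tsum_eq_zero_of_not_summable hns] at h0
    have h1 : (0:ℝ) < 1 + 3/4 := by norm_num
    have h2 := Real.rpow_pos_of_pos h1 x
    have hlog : 0 < Real.log (1 + 3/4 : ℝ) := Real.log_pos (by norm_num)
    have : (0:ℝ) < (3/4 : ℝ) * (1 + 3/4 : ℝ) ^ x / Real.log (1 + 3/4 : ℝ) := by positivity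
    rw [h0] at this
    exact lt_irrefl 0 this
  obtain ⟨C, hC⟩ : ∃ C : ℝ, ∀ k, |G k x| * (3/4:ℝ)^k ≤ C := by
    have h := hhalfsum.tendsto_atTop_zero.abs
    rw [abs_zero] at h
    obtain ⟨C, hC⟩ := h.bddAbove_range
    refine ⟨C, fun k => ?_⟩
    have := hC (Set.mem_range_self k)
    rwa [abs_mul, abs_pow, abs_of_pos (by norm_num : (0:ℝ) < 3/4)] at this
  have hGsum : ∀ z : ℝ, |z| ≤ 1/2 → Summable (fun k => G k x * z ^ k) := by
    intro z hz
    apply Summable.of_norm_bounded (g := fun k => C * (2/3:ℝ)^k)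
      ((summable_geometric_of_lt_one (by norm_num) (by norm_num)).mul_left C)
    intro k
    rw [Real.norm_eq_abs, abs_mul, abs_pow]
    have e : (1/2:ℝ)^k = (3/4:ℝ)^k * (2/3:ℝ)^k := by rw [← mul_pow]; norm_num
    calc |G k x| * |z|^k ≤ |G k x| * ((3/4:ℝ)^k * (2/3:ℝ)^k) := by
          rw [← e]
          exact mul_le_mul_of_nonneg_left (pow_le_pow_left₀ (abs_nonneg z) hz k) (abs_nonneg _)
      _ = (|G k x| * (3/4:ℝ)^k) * (2/3:ℝ)^k := by ring
      _ ≤ C * (2/3:ℝ)^k := mul_le_mul_of_nonneg_right (hC k) (by positivity)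
  set F : ℝ → ℝ := fun z => ∑' k, G k x * z ^ k with hF
  set pG := FormalMultilinearSeries.ofScalars ℝ (fun k => G k x) with hpG
  have hhalfcoe : (((1/2 : ℝ≥0)) : ℝ) = 1/2 := by norm_num
  have hpGball : HasFPowerSeriesOnBall F pG 0 ((1/2 : ℝ≥0) : ℝ≥0∞) := by
    refine ⟨?_, ?_, ?_⟩
    · apply FormalMultilinearSeries.le_radius_of_bound _ C
      intro k
      rw [FormalMultilinearSeries.ofScalars_norm, hhalfcoe, Real.norm_eq_abs]
      have e : (1/2:ℝ)^k ≤ (3/4:ℝ)^k := pow_le_pow_left₀ (by norm_num) (by norm_num) k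
      calc |G k x| * (1/2:ℝ)^k ≤ |G k x| * (3/4:ℝ)^k :=
            mul_le_mul_of_nonneg_left e (abs_nonneg _)
        _ ≤ C := hC k
    · exact ENNReal.coe_pos.mpr (by norm_num)
    · intro z hz
      rw [EMetric.mem_ball, edist_zero_right, enorm_eq_nnnorm, ENNReal.coe_lt_coe] at hz
      have hz' : |z| ≤ 1/2 := by
        have := NNReal.coe_lt_coe.mpr hz
        rw [coe_nnnorm, Real.norm_eq_abs, hhalfcoe] at this
        exact this.le
      rw [hpG, hF]
      simp only [FormalMultilinearSeries.ofScalars_apply_eq, smul_eq_mul, zero_add]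
      exact (hGsum z hz').hasSum
  have hFcont : ContinuousAt F 0 := (hpGball.hasFPowerSeriesAt).continuousAt
  have hF0 : F 0 = G 0 x := by
    rw [hF]
    simp only
    rw [tsum_eq_single 0 (fun k hk => by rw [zero_pow hk, mul_zero])]
    simp
  -- the limit of t * (1+t)^x / log (1+t) as t → 0⁺ is 1
  have hlim1 : Filter.Tendsto (fun t : ℝ => Real.log (1+t) / t) (nhdsWithin 0 {(0:ℝ)}ᶜ) (nhds 1) := by
    have h1 : HasDerivAt (fun t : ℝ => 1 + t) 1 0 := by
      simpa using (hasDerivAt_id (0:ℝ)).const_add (1:ℝ)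
    have hd : HasDerivAt (fun t : ℝ => Real.log (1+t)) 1 0 := by
      have := h1.log (by norm_num)
      simpa using this
    have := hasDerivAt_iff_tendsto_slope.mp hd
    exact this.congr (fun t => by rw [slope_def_field]; simp [Real.log_one])
  have hmono : nhdsWithin (0:ℝ) (Set.Ioi 0) ≤ nhdsWithin (0:ℝ) {(0:ℝ)}ᶜ :=
    nhdsWithin_mono 0 (fun z hz => ne_of_gt hz)
  have hlim2 : Filter.Tendsto (fun t : ℝ => t / Real.log (1+t)) (nhdsWithin 0 (Set.Ioi 0)) (nhds 1) := by
    have h2 := (hlim1.mono_left hmono).inv₀ one_ne_zero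
    rw [inv_one] at h2
    exact h2.congr (fun t => by rw [inv_div])
  have hrp : Filter.Tendsto (fun t : ℝ => (1+t) ^ x) (nhdsWithin 0 (Set.Ioi 0)) (nhds 1) := by
    have hc : ContinuousAt (fun t : ℝ => (1+t) ^ x) 0 := by
      have houter : ContinuousAt (fun w : ℝ => w ^ x) ((fun t : ℝ => 1 + t) 0) := by
        simp only [add_zero]
        exact Real.continuousAt_rpow_const 1 x (Or.inl one_ne_zero)
      exact houter.comp ((continuous_const.add continuous_id).continuousAt)
    have h' := hc.tendsto
    simp only [add_zero, Real.one_rpow] at h'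
    exact h'.mono_left nhdsWithin_le_nhds
  have hflim : Filter.Tendsto (fun t : ℝ => t * (1+t)^x / Real.log (1+t))
      (nhdsWithin 0 (Set.Ioi 0)) (nhds 1) := by
    have h' := hlim2.mul hrp
    rw [mul_one] at h'
    exact h'.congr (fun t => by ring)
  have hFeq : ∀ᶠ t in nhdsWithin (0:ℝ) (Set.Ioi 0), t * (1+t)^x / Real.log (1+t) = F t := by
    filter_upwards [Ioo_mem_nhdsGT_of_mem (by norm_num : (0:ℝ) ∈ Set.Ico (0:ℝ) 1)] with t ht
    have h1 := hG x t (by rw [abs_of_pos ht.1]; exact ht.1) (by rw [abs_of_pos ht.1]; exact ht.2)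
    rw [hF]
    exact h1
  have hG0 : G 0 x = 1 := by
    have hFlim : Filter.Tendsto F (nhdsWithin 0 (Set.Ioi 0)) (nhds (G 0 x)) := by
      rw [← hF0]
      exact hFcont.tendsto.mono_left nhdsWithin_le_nhds
    have h' : Filter.Tendsto (fun t : ℝ => t * (1+t)^x / Real.log (1+t))
        (nhdsWithin 0 (Set.Ioi 0)) (nhds (G 0 x)) := hFlim.congr' (Filter.EventuallyEq.symm hFeq)
    exact tendsto_nhds_unique h' hflim
  -- coefficient series from the integrals
  set a : ℕ → ℝ := fun k => ∫ u in x..(x+1), gregC u k with ha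
  have ha0 : a 0 = 1 := by
    rw [ha]
    simp only
    rw [intervalIntegral.integral_congr (fun u _ => gregC_zero u)]
    simp
  set m := ⌈|x|⌉₊ + 1 with hm
  have haB : ∀ k : ℕ, |a k| ≤ ((k:ℝ)+2)^m := fun k => abs_integral_gregC_le x k
  set pa := FormalMultilinearSeries.ofScalars ℝ a with hpa
  have hpaball : HasFPowerSeriesOnBall F pa 0 ((1/2 : ℝ≥0) : ℝ≥0∞) := by
    refine ⟨?_, ?_, ?_⟩
    · apply FormalMultilinearSeries.le_radius_of_summable_norm
      apply Summable.of_norm_bounded (g := fun k : ℕ => ((k:ℝ)+2)^m * (1/2:ℝ)^k)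
        (summable_geom_aux m (by norm_num) (by norm_num))
      intro k
      have h1 : ‖pa k‖ = |a k| := by
        rw [hpa, FormalMultilinearSeries.ofScalars_norm, Real.norm_eq_abs]
      rw [Real.norm_eq_abs, abs_of_nonneg (by positivity), h1, hhalfcoe]
      exact mul_le_mul_of_nonneg_right (haB k) (by positivity)
    · exact ENNReal.coe_pos.mpr (by norm_num)
    · intro z hz
      rw [EMetric.mem_ball, edist_zero_right, enorm_eq_nnnorm, ENNReal.coe_lt_coe] at hz
      have hz' : |z| < 1/2 := by
        have h2 := NNReal.coe_lt_coe.mpr hz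
        rwa [coe_nnnorm, Real.norm_eq_abs, hhalfcoe] at h2
      have hz1 : |z| < 1 := by linarith
      rw [hpa]
      simp only [FormalMultilinearSeries.ofScalars_apply_eq, smul_eq_mul, zero_add]
      by_cases hz0 : z = 0
      · subst hz0
        have hsingle : HasSum (fun k => a k * (0:ℝ)^k) (a 0 * (0:ℝ)^0) :=
          hasSum_single 0 (fun k hk => by rw [zero_pow hk, mul_zero])
        have e : a 0 * (0:ℝ)^0 = 1 := by rw [ha0]; norm_num
        rw [e] at hsingle
        have eF : F 0 = 1 := by rw [hF0, hG0]
        rw [eF]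
        exact hsingle
      · have h1 := gregC_integral_hasSum x hz1
        rw [integral_rpow_eval x hz0 hz1] at h1
        have h2 := hG x z (abs_pos.mpr hz0) hz1
        rw [h2] at h1
        exact h1
  have huniq : pG = pa :=
    (hpGball.hasFPowerSeriesAt).eq_formalMultilinearSeries (hpaball.hasFPowerSeriesAt)
  have hcoef : (fun k => G k x) = a := by
    rw [hpG, hpa] at huniq
    exact (FormalMultilinearSeries.ofScalars_series_eq_iff ℝ (fun k => G k x) a).mp huniq
  have hfinal := congrFun hcoef n
  rw [hfinal, ha]
  rfl
end

section
/- Eisenstein's congruence: for every odd prime p and integer x with x ≢ 0 and x+1 ≢ 0 (mod p), Σ_{m=1}^{p−1} (−1)^{m−1} x^m / m ≡ (x+1) q_p(x+1) − x q_p(x) (mod p), where q_p(y) = (y^{p−1} − 1)/p is the Fermat quotient. -/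
lemma aux_choose (p : ℕ) (hp : p.Prime) : ∀ k, k < p → (((p-1).choose k : ZMod p)) = (-1)^k := by
  intro k
  induction k with
  | zero => simp
  | succ k ih =>
    intro h
    have hk : k < p := Nat.lt_of_succ_lt h
    have h1 : (p-1).choose k + (p-1).choose (k+1) = p.choose (k+1) := by
      have := Nat.choose_succ_succ' (p-1) k
      rw [Nat.sub_add_cancel hp.one_lt.le] at this; exact this.symm
    have h2 : ((p.choose (k+1) : ℕ) : ZMod p) = 0 := by
      rw [ZMod.natCast_eq_zero_iff]
      exact hp.dvd_choose_self (Nat.succ_ne_zero k) h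
    have h4 := congrArg (fun n : ℕ => (n : ZMod p)) h1
    simp only [Nat.cast_add] at h4
    rw [h2] at h4
    have h3 : ((p-1).choose (k+1) : ZMod p) = -((p-1).choose k : ZMod p) := by
      linear_combination h4
    rw [h3, ih hk, pow_succ]
    ring

/-- Eisenstein's congruence: for an odd prime `p` and an integer `x` with
`p ∤ x` and `p ∤ x+1`,
`∑_{m=1}^{p-1} (-1)^{m-1} x^m / m ≡ (x+1) q_p(x+1) - x q_p(x) (mod p)`,
where `q_p(y) = (y^{p-1} - 1)/p` is the Fermat quotient. -/
theorem stmt_16 (p : ℕ) [Fact p.Prime] (hodd : Odd p) (x : ℤ)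
    (hx : ¬ (p : ℤ) ∣ x) (hx1 : ¬ (p : ℤ) ∣ (x + 1)) :
    ∑ m ∈ Finset.Icc 1 (p - 1), (-1 : ZMod p) ^ (m - 1) * (x : ZMod p) ^ m / (m : ZMod p) =
      (((x + 1) * (((x + 1) ^ (p - 1) - 1) / (p : ℤ)) - x * ((x ^ (p - 1) - 1) / (p : ℤ)) : ℤ) :
        ZMod p) := by
  have hp : p.Prime := Fact.out
  set n := p - 1 with hn
  have hn1 : n + 1 = p := Nat.sub_add_cancel hp.one_lt.le
  have hdx : ((x : ZMod p)) ≠ 0 := by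
    rw [Ne, ZMod.intCast_zmod_eq_zero_iff_dvd]; exact hx
  have hdx1 : (((x+1) : ℤ) : ZMod p) ≠ 0 := by
    rw [Ne, ZMod.intCast_zmod_eq_zero_iff_dvd]; exact hx1
  have hfl : ∀ y : ℤ, ((y : ZMod p)) ≠ 0 → (p:ℤ) ∣ y^n - 1 := by
    intro y hy
    have h1 : (y : ZMod p)^n = 1 := ZMod.pow_card_sub_one_eq_one hy
    have h2 : ((y^n - 1 : ℤ) : ZMod p) = 0 := by push_cast; rw [h1]; ring
    rwa [ZMod.intCast_zmod_eq_zero_iff_dvd] at h2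
  set q1 : ℤ := ((x+1)^n - 1)/p with hq1def
  set q0 : ℤ := (x^n - 1)/p with hq0def
  have hq1 : (p:ℤ) * q1 = (x+1)^n - 1 := Int.mul_ediv_cancel' (hfl _ hdx1)
  have hq0 : (p:ℤ) * q0 = x^n - 1 := Int.mul_ediv_cancel' (hfl _ hdx)
  set R : ℤ := (x+1)*q1 - x*q0 with hRdef
  have hpR : (p:ℤ) * R = (x+1)^(n+1) - x^(n+1) - 1 := by
    have h : (p:ℤ)*R = (x+1)*((p:ℤ)*q1) - x*((p:ℤ)*q0) := by rw [hRdef]; ring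
    rw [h, hq1, hq0]; ring
  have hbin : (x+1)^(n+1) = ∑ m ∈ Finset.range (n+2), x^m * ((n+1).choose m : ℤ) := by
    have := add_pow x 1 (n+1)
    simpa using this
  have hsplit : Finset.range (n+2) = insert 0 (insert (n+1) (Finset.Icc 1 n)) := by
    ext m; simp only [Finset.mem_range, Finset.mem_insert, Finset.mem_Icc]; omega
  have h0 : (0:ℕ) ∉ insert (n+1) (Finset.Icc 1 n) := by
    simp only [Finset.mem_insert, Finset.mem_Icc]; omega
  have h1 : n+1 ∉ Finset.Icc 1 n := by
    simp only [Finset.mem_Icc]; omega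
  have hsum : ∑ m ∈ Finset.Icc 1 n, ((p.choose m : ℤ)) * x^m = (p:ℤ) * R := by
    rw [hpR, hbin, hsplit, Finset.sum_insert h0, Finset.sum_insert h1]
    simp only [pow_zero, Nat.choose_zero_right, Nat.choose_self, Nat.cast_one, mul_one, one_mul,
      hn1]
    rw [Finset.sum_congr rfl (fun m _ => mul_comm (x^m) ((p.choose m : ℤ)))]
    ring
  set c : ℕ → ℤ := fun m => (p.choose m : ℤ)/p with hcdef
  have hcm : ∀ m ∈ Finset.Icc 1 n, (p:ℤ) * c m = (p.choose m : ℤ) := by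
    intro m hm
    simp only [Finset.mem_Icc] at hm
    refine Int.mul_ediv_cancel' ?_
    exact_mod_cast Int.natCast_dvd_natCast.mpr
      (hp.dvd_choose_self (by omega) (by omega))
  have hp0 : (p:ℤ) ≠ 0 := by exact_mod_cast hp.ne_zero
  have hR : R = ∑ m ∈ Finset.Icc 1 n, c m * x^m := by
    apply mul_left_cancel₀ hp0
    rw [Finset.mul_sum, ← hsum]
    refine Finset.sum_congr rfl (fun m hm => ?_)
    rw [← mul_assoc, hcm m hm]
  have hterm : ∀ m ∈ Finset.Icc 1 n, ((c m : ZMod p)) = (-1)^(m-1) / (m : ZMod p) := by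
    intro m hm
    simp only [Finset.mem_Icc] at hm
    have hmlt : m < p := by omega
    have hmne : (m : ZMod p) ≠ 0 := by
      rw [Ne, ZMod.natCast_eq_zero_iff]
      intro hdvd
      have := Nat.le_of_dvd (by omega) hdvd
      omega
    have hint : (m:ℤ) * c m = ((p-1).choose (m-1) : ℤ) := by
      apply mul_left_cancel₀ hp0
      have hnat := Nat.add_one_mul_choose_eq (p-1) (m-1)
      rw [Nat.sub_add_cancel hp.one_lt.le, Nat.sub_add_cancel (by omega : 1 ≤ m)] at hnat
      have hnat' : ((p : ℕ) : ℤ) * ((p-1).choose (m-1) : ℤ) = (p.choose m : ℤ) * m := by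
        exact_mod_cast congrArg (fun t : ℕ => (t : ℤ)) hnat
      rw [← mul_assoc, mul_comm ((p:ℤ)) ((m:ℤ)), mul_assoc, hcm m (by
        simp only [Finset.mem_Icc]; omega), hnat']
      ring
    have hz : (m : ZMod p) * (c m : ZMod p) = (-1)^(m-1) := by
      have := congrArg (fun t : ℤ => (t : ZMod p)) hint
      push_cast at this
      rw [this]
      exact aux_choose p hp (m-1) (by omega)
    field_simp
    linear_combination hz
  calc ∑ m ∈ Finset.Icc 1 n, (-1 : ZMod p) ^ (m - 1) * (x : ZMod p) ^ m / (m : ZMod p)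
      = ∑ m ∈ Finset.Icc 1 n, (c m : ZMod p) * (x : ZMod p)^m := by
        refine Finset.sum_congr rfl (fun m hm => ?_)
        rw [hterm m hm]; ring
    _ = ((R : ℤ) : ZMod p) := by
        rw [hR]; push_cast; ring
end

section
/- For every sufficiently large prime p (p larger than the denominator and relevant numerators of x) and rational x with x, x+1, x+2 all p-adic units or p-adic integers with x+1, x+2 ≢ 0 mod p, the Gregory polynomial value satisfies G_{p−1}(x) − 1/p! ≡ −(x+2) q_p(x+2) + (x+1) q_p(x+1) + 1 (mod p), where q_p denotes the Fermat quotient. -/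
open Finset Polynomial

namespace Stmt17Aux

variable {p : ℕ} [Fact p.Prime]

lemma not_dvd_of_lt {m : ℕ} (h0 : m ≠ 0) (h : m < p) : ¬ p ∣ m :=
  fun hd => absurd (Nat.le_of_dvd (Nat.pos_of_ne_zero h0) hd) (by omega)

lemma den_ne {q : ℚ} (hq : ¬ p ∣ q.den) : ((q.den : ZMod p)) ≠ 0 :=
  fun h => hq ((ZMod.natCast_eq_zero_iff _ _).mp h)

lemma ok_add {a b : ℚ} (ha : ¬ p ∣ a.den) (hb : ¬ p ∣ b.den) : ¬ p ∣ (a + b).den := by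
  intro h
  have hp : p.Prime := Fact.out
  have := h.trans (Rat.add_den_dvd a b)
  rcases (Nat.Prime.dvd_mul hp).mp this with h' | h' <;> [exact ha h'; exact hb h']

lemma ok_mul {a b : ℚ} (ha : ¬ p ∣ a.den) (hb : ¬ p ∣ b.den) : ¬ p ∣ (a * b).den := by
  intro h
  have hp : p.Prime := Fact.out
  have := h.trans (Rat.mul_den_dvd a b)
  rcases (Nat.Prime.dvd_mul hp).mp this with h' | h' <;> [exact ha h'; exact hb h']

lemma ok_nat (m : ℕ) : ¬ p ∣ ((m : ℚ)).den := by
  rw [Rat.den_natCast]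
  intro h
  exact (Fact.out : p.Prime).one_lt.ne' (Nat.dvd_one.mp h)

lemma ok_one : ¬ p ∣ ((1 : ℚ)).den := by simpa using ok_nat (p := p) 1

lemma ok_neg {a : ℚ} (ha : ¬ p ∣ a.den) : ¬ p ∣ (-a).den := by
  rwa [Rat.den_neg_eq_den]

lemma ok_sub {a b : ℚ} (ha : ¬ p ∣ a.den) (hb : ¬ p ∣ b.den) : ¬ p ∣ (a - b).den := by
  rw [sub_eq_add_neg]; exact ok_add ha (ok_neg hb)

lemma ok_pow {a : ℚ} (ha : ¬ p ∣ a.den) (k : ℕ) : ¬ p ∣ (a ^ k).den := by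
  induction k with
  | zero => simpa using ok_one
  | succ k ih => rw [pow_succ]; exact ok_mul ih ha

lemma cast_add' {a b : ℚ} (ha : ¬ p ∣ a.den) (hb : ¬ p ∣ b.den) :
    ((a + b : ℚ) : ZMod p) = (a : ZMod p) + b :=
  Rat.cast_add_of_ne_zero (den_ne ha) (den_ne hb)

lemma cast_mul' {a b : ℚ} (ha : ¬ p ∣ a.den) (hb : ¬ p ∣ b.den) :
    ((a * b : ℚ) : ZMod p) = (a : ZMod p) * b :=
  Rat.cast_mul_of_ne_zero (den_ne ha) (den_ne hb)

lemma cast_sub' {a b : ℚ} (ha : ¬ p ∣ a.den) (hb : ¬ p ∣ b.den) :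
    ((a - b : ℚ) : ZMod p) = (a : ZMod p) - b :=
  Rat.cast_sub_of_ne_zero (den_ne ha) (den_ne hb)

lemma cast_pow' {a : ℚ} (ha : ¬ p ∣ a.den) (k : ℕ) :
    ((a ^ k : ℚ) : ZMod p) = (a : ZMod p) ^ k := by
  induction k with
  | zero => simp
  | succ k ih => rw [pow_succ, cast_mul' (ok_pow ha k) ha, ih, pow_succ]

lemma cast_div_nat' {a : ℚ} {m : ℕ} (ha : ¬ p ∣ a.den) (hm : ¬ p ∣ m) :
    ((a / (m : ℚ) : ℚ) : ZMod p) = (a : ZMod p) / (m : ZMod p) := by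
  have h1 : (((m : ℚ)).num : ZMod p) ≠ 0 := by
    rw [Rat.num_natCast]
    push_cast
    exact fun h => hm ((ZMod.natCast_eq_zero_iff _ _).mp h)
  rw [Rat.cast_div_of_ne_zero (den_ne ha) h1, Rat.cast_natCast]

lemma ok_div_nat {a : ℚ} {m : ℕ} (ha : ¬ p ∣ a.den) (hm : ¬ p ∣ m) :
    ¬ p ∣ (a / (m : ℚ)).den := by
  have hm0 : m ≠ 0 := fun h => hm (h ▸ dvd_zero p)
  have : a / (m : ℚ) = a * ((m : ℚ))⁻¹ := div_eq_mul_inv a _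
  rw [this]
  intro h
  have hd := h.trans (Rat.mul_den_dvd a _)
  rw [Rat.inv_natCast_den_of_pos (Nat.pos_of_ne_zero hm0)] at hd
  rcases (Nat.Prime.dvd_mul (Fact.out : p.Prime)).mp hd with h' | h' <;> [exact ha h'; exact hm h']

lemma ok_cast_sum {ι : Type*} (t : Finset ι) (f : ι → ℚ)
    (h : ∀ i ∈ t, ¬ p ∣ (f i).den) :
    ¬ p ∣ (∑ i ∈ t, f i).den ∧ ((∑ i ∈ t, f i : ℚ) : ZMod p) = ∑ i ∈ t, ((f i : ZMod p)) := by
  classical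
  induction t using Finset.cons_induction with
  | empty => refine ⟨by simpa using ok_one (p := p), by simp⟩
  | cons a t ha ih =>
    have h1 := h a (Finset.mem_cons_self a t)
    obtain ⟨ih1, ih2⟩ := ih (fun i hi => h i (Finset.mem_cons_of_mem hi))
    rw [Finset.sum_cons, Finset.sum_cons]
    exact ⟨ok_add h1 ih1, by rw [cast_add' h1 ih1, ih2]⟩

lemma ok_div_p {N : ℚ} (hN : ¬ p ∣ N.den) (h0 : (N : ZMod p) = 0) :
    ¬ p ∣ (N / (p : ℚ)).den := by
  have hp : p.Prime := Fact.out
  have hnum : (p : ℤ) ∣ N.num := by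
    rw [Rat.cast_def, _root_.div_eq_zero_iff] at h0
    rcases h0 with h0 | h0
    · exact (ZMod.intCast_zmod_eq_zero_iff_dvd _ _).mp h0
    · exact absurd h0 (den_ne hN)
  obtain ⟨m, hm⟩ := hnum
  have hden0 : ((N.den : ℚ)) ≠ 0 := by positivity
  have hp0 : ((p : ℚ)) ≠ 0 := by exact_mod_cast hp.pos.ne'
  have hNd : N * (N.den : ℚ) = (N.num : ℚ) := by
    exact_mod_cast Rat.mul_den_eq_num N
  have hrepr : N / (p : ℚ) = ((m : ℚ)) / ((N.den : ℚ)) := by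
    rw [div_eq_div_iff hp0 hden0, mul_comm N _, mul_comm _ N, hNd, hm]
    push_cast; ring
  rw [hrepr]
  intro h
  have hd : ((((m : ℚ)) / ((N.den : ℚ))).den : ℤ) ∣ (N.den : ℤ) := by
    rw [show ((m : ℚ)) / ((N.den : ℚ)) = Rat.divInt m ((N.den : ℕ) : ℤ) by
      rw [Rat.divInt_eq_div]; push_cast; ring]
    exact Rat.den_dvd m _
  exact hN (h.trans (Int.ofNat_dvd.mp hd))

end Stmt17Aux


namespace Stmt17Aux2

variable {p : ℕ} [Fact p.Prime]

lemma choose_mod (k : ℕ) (hk : k ≤ p - 1) : (((p-1).choose k : ZMod p)) = (-1)^k := by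
  induction k with
  | zero => simp
  | succ k ih =>
    have hp : p.Prime := Fact.out
    have hp1 : 1 ≤ p := hp.one_le
    have h1 : p ∣ p.choose (k+1) := hp.dvd_choose_self (Nat.succ_ne_zero k) (by omega)
    have h2 : p.choose (k+1) = (p-1).choose k + (p-1).choose (k+1) := by
      conv_lhs => rw [← Nat.sub_add_cancel hp1]
      exact Nat.choose_succ_succ _ _
    have h3 : ((p.choose (k+1) : ZMod p)) = 0 := (ZMod.natCast_eq_zero_iff _ _).mpr h1
    rw [h2] at h3
    push_cast at h3
    rw [ih (by omega)] at h3
    have h4 : ((p-1).choose (k+1) : ZMod p) = -(-1:ZMod p)^k := by linear_combination h3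
    rw [h4, pow_succ]; ring

lemma prodZ_cast (R : Type*) [CommRing R] (m : ℕ) :
    (∏ i ∈ range m, (X - C (i : ℤ))).map (Int.castRingHom R) =
      ∏ i ∈ range m, (X - C (i : R)) := by
  rw [Polynomial.map_prod]
  exact prod_congr rfl fun i _ => by simp

lemma prod_univ_zmod : ∏ a : ZMod p, (X - C a) = X ^ p - X := by
  have hp : p.Prime := Fact.out
  have h1lt : 1 < p := hp.one_lt
  have hcard : Fintype.card (ZMod p) = p := ZMod.card p
  have hmonic : (X ^ p - X : (ZMod p)[X]).Monic := by
    apply monic_X_pow_sub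
    rw [degree_X]
    exact_mod_cast h1lt
  have hroots : (X ^ p - X : (ZMod p)[X]).roots = Finset.univ.val := by
    have := FiniteField.roots_X_pow_card_sub_X (ZMod p)
    rwa [hcard] at this
  have hdeg : (X ^ p - X : (ZMod p)[X]).natDegree = p :=
    FiniteField.X_pow_card_sub_X_natDegree_eq _ h1lt
  have hsplits : Splits (X ^ p - X : (ZMod p)[X]) := by
    rw [splits_iff_card_roots, hroots, hdeg]
    simpa using hcard
  have heq := hsplits.eq_prod_roots_of_monic hmonic
  rw [hroots] at heq
  rw [Finset.prod_eq_multiset_prod, ← heq]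

lemma prod_range_zmod : ∏ i ∈ range p, (X - C ((i:ℕ) : ZMod p)) = X ^ p - X := by
  rw [← prod_univ_zmod]
  apply Finset.prod_nbij' (fun i => ((i:ℕ) : ZMod p)) (fun a => a.val)
  · intro a _; exact mem_univ _
  · intro a _; exact mem_range.mpr (ZMod.val_lt a)
  · intro a ha; exact ZMod.val_cast_of_lt (mem_range.mp ha)
  · intro a _; exact ZMod.natCast_rightInverse a
  · intro a _; rfl

lemma mul_prod_range_zmod :
    (X + 1) * ∏ i ∈ range (p-1), (X - C ((i:ℕ) : ZMod p)) = X ^ p - X := by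
  have hp : p.Prime := Fact.out
  have hp1 : 1 ≤ p := hp.one_le
  have hlast : (X - C (((p-1:ℕ)) : ZMod p)) = X + 1 := by
    rw [Nat.cast_sub hp1]
    simp
  calc (X + 1) * ∏ i ∈ range (p-1), (X - C ((i:ℕ) : ZMod p))
      = (∏ i ∈ range (p-1), (X - C ((i:ℕ) : ZMod p))) * (X - C (((p-1:ℕ)) : ZMod p)) := by
        rw [hlast, mul_comm]
    _ = ∏ i ∈ range ((p-1)+1), (X - C ((i:ℕ) : ZMod p)) := (prod_range_succ _ _).symm
    _ = X ^ p - X := by rw [Nat.sub_add_cancel hp1]; exact prod_range_zmod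

lemma mul_sum_pow (hodd : Odd p) :
    (X + 1) * ∑ k ∈ range (p-1), (-X : (ZMod p)[X]) ^ (k+1) = X ^ p - X := by
  have hp : p.Prime := Fact.out
  have hp1 : 1 ≤ p := hp.one_le
  have hEven : Even (p - 1) := Nat.Odd.sub_odd hodd odd_one
  have hg := geom_sum_mul (-X : (ZMod p)[X]) (p-1)
  rw [hEven.neg_pow] at hg
  have hR : (∑ k ∈ range (p-1), (-X : (ZMod p)[X]) ^ (k+1)) =
      (∑ k ∈ range (p-1), (-X : (ZMod p)[X]) ^ k) * (-X) := by
    rw [Finset.sum_mul]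
    exact sum_congr rfl fun k _ => pow_succ _ _
  have hpow : (X : (ZMod p)[X]) ^ (p-1) * X = X ^ p := by
    rw [← pow_succ, Nat.sub_add_cancel hp1]
  rw [hR]
  linear_combination (X : (ZMod p)[X]) * hg + hpow - X * hpow + (X:(ZMod p)[X]) * hpow

lemma sum_pow_coeff {j : ℕ} (hj1 : 1 ≤ j) (hj2 : j ≤ p - 1) :
    (∑ k ∈ range (p-1), (-X : (ZMod p)[X]) ^ (k+1)).coeff j = (-1)^j := by
  rw [finset_sum_coeff]
  have hterm : ∀ k, ((-X : (ZMod p)[X]) ^ (k+1)).coeff j =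
      if j = k+1 then (-1 : ZMod p)^(k+1) else 0 := by
    intro k
    rw [neg_pow]
    rw [← show (C ((-1 : ZMod p)^(k+1)) : (ZMod p)[X]) = ((-1 : (ZMod p)[X]))^(k+1) by
      rw [map_pow, map_neg, map_one]]
    rw [coeff_C_mul, coeff_X_pow, mul_ite, mul_one, mul_zero]
  rw [sum_congr rfl fun k _ => hterm k]
  rw [Finset.sum_eq_single (j-1)]
  · rw [if_pos (by omega), Nat.sub_add_cancel hj1]
  · intro k _ hk
    rw [if_neg (by omega)]
  · intro h
    exact absurd (mem_range.mpr (by omega)) h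

lemma stirling_mod (hodd : Odd p) (s : ℕ → ℕ → ℕ)
    (hs : ∀ (n : ℕ) (u : ℚ), ∏ i ∈ Finset.range n, (u - (i : ℚ)) =
        ∑ j ∈ Finset.range (n + 1), (-1 : ℚ) ^ (n - j) * (s n j : ℚ) * u ^ j) :
    (∀ j, 1 ≤ j → j ≤ p - 1 → ((s (p-1) j : ZMod p)) = 1) ∧ s (p-1) (p-1) = 1 := by
  have hp : p.Prime := Fact.out
  have hp1 : 1 ≤ p := hp.one_le
  have hEven : Even (p - 1) := Nat.Odd.sub_odd hodd odd_one
  have hPmonic : (∏ i ∈ range (p-1), (X - C (i : ℤ))).Monic :=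
    monic_prod_of_monic _ _ (fun i _ => monic_X_sub_C _)
  have hPdeg : (∏ i ∈ range (p-1), (X - C (i : ℤ))).natDegree = p - 1 := by
    rw [natDegree_prod _ _ (fun i _ => X_sub_C_ne_zero _)]
    simp only [natDegree_X_sub_C, sum_const, card_range, smul_eq_mul, mul_one]
  have hmapQ : (∏ i ∈ range (p-1), (X - C (i : ℤ))).map (Int.castRingHom ℚ) =
      ∑ j ∈ range ((p-1)+1), C ((-1 : ℚ)^((p-1)-j) * (s (p-1) j : ℚ)) * X ^ j := by
    apply Polynomial.funext
    intro u
    rw [prodZ_cast, eval_prod]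
    simp only [eval_sub, eval_X, eval_C]
    rw [hs (p-1) u, eval_finset_sum]
    simp [eval_mul, eval_pow]
  have hcoeffQ : ∀ j, j ≤ p - 1 →
      (((∏ i ∈ range (p-1), (X - C (i : ℤ))).coeff j : ℚ)) =
        (-1:ℚ)^((p-1)-j) * (s (p-1) j : ℚ) := by
    intro j hj
    have h := congrArg (fun q => Polynomial.coeff q j) hmapQ
    simp only [coeff_map, Int.coe_castRingHom, finset_sum_coeff, coeff_C_mul, coeff_X_pow,
      mul_ite, mul_one, mul_zero] at h
    rwa [Finset.sum_ite_eq, if_pos (mem_range.mpr (by omega))] at h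
  have hsnn : s (p-1) (p-1) = 1 := by
    have h1 : (∏ i ∈ range (p-1), (X - C (i : ℤ))).coeff (p-1) = 1 := by
      have := hPmonic.coeff_natDegree
      rwa [hPdeg] at this
    have h2 := hcoeffQ (p-1) le_rfl
    rw [h1, Nat.sub_self, pow_zero, one_mul] at h2
    exact_mod_cast h2.symm
  refine ⟨?_, hsnn⟩
  intro j hj1 hj2
  -- integer coefficients
  have hcoeffZ : (∏ i ∈ range (p-1), (X - C (i : ℤ))).coeff j =
      (-1:ℤ)^((p-1)-j) * (s (p-1) j : ℤ) := by
    have := hcoeffQ j hj2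
    exact_mod_cast this
  -- identify the mapped polynomial with the sum
  have hPb : (∏ i ∈ range (p-1), (X - C (i : ℤ))).map (Int.castRingHom (ZMod p)) =
      ∑ k ∈ range (p-1), (-X : (ZMod p)[X]) ^ (k+1) := by
    have hX1 : (X + 1 : (ZMod p)[X]) ≠ 0 := by
      intro h
      have := congrArg (fun q => Polynomial.coeff q 0) h
      simp at this
    apply mul_left_cancel₀ hX1
    rw [prodZ_cast, mul_prod_range_zmod, mul_sum_pow hodd]
  have hcast := congrArg (fun q => Polynomial.coeff q j) hPb
  simp only [coeff_map, Int.coe_castRingHom] at hcast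
  rw [hcoeffZ, sum_pow_coeff hj1 hj2] at hcast
  push_cast at hcast
  -- hcast : (-1)^((p-1)-j) * (s (p-1) j : ZMod p) = (-1)^j
  have hsq : ((-1 : ZMod p))^((p-1)-j) * ((-1 : ZMod p))^((p-1)-j) = 1 := by
    rw [← pow_add]
    exact Even.neg_one_pow ⟨(p-1)-j, rfl⟩
  have hnj : ((-1 : ZMod p))^((p-1)-j) * ((-1 : ZMod p))^j = 1 := by
    rw [← pow_add, Nat.sub_add_cancel hj2]
    exact Even.neg_one_pow hEven
  calc ((s (p-1) j : ZMod p)) = ((-1 : ZMod p))^((p-1)-j) * ((-1)^((p-1)-j) * (s (p-1) j : ZMod p)) := by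
        rw [← mul_assoc, hsq, one_mul]
    _ = ((-1 : ZMod p))^((p-1)-j) * (-1)^j := by rw [hcast]
    _ = 1 := hnj

end Stmt17Aux2

section MainProof

open Stmt17Aux Stmt17Aux2

private def dt (p : ℕ) (s : ℕ → ℕ → ℕ) (x : ℚ) (j : ℕ) : ℚ :=
  ((-1:ℚ)^j / ((j:ℚ)+1)) * (s (p-1) j : ℚ) * ((x+1)^(j+1) - x^(j+1))

private def Mq (p k : ℕ) : ℕ := p.choose k / p

/-- For a sufficiently large prime `p` and a rational `x` that is a `p`-adic integer with
`x+1, x+2 ≢ 0 (mod p)`, the Gregory polynomial value satisfies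
`G_{p-1}(x) - 1/p! ≡ -(x+2) q_p(x+2) + (x+1) q_p(x+1) + 1 (mod p)`,
where `q_p(y) = (y^{p-1}-1)/p` is the Fermat quotient. Here the Gregory polynomials are
given by the explicit formula in terms of the unsigned Stirling numbers of the first kind. -/
theorem stmt_17 (p : ℕ) [Fact p.Prime] (hodd : Odd p)
    (s : ℕ → ℕ → ℕ)
    (hs : ∀ (n : ℕ) (u : ℚ),
      ∏ i ∈ Finset.range n, (u - (i : ℚ)) =
        ∑ j ∈ Finset.range (n + 1), (-1 : ℚ) ^ (n - j) * (s n j : ℚ) * u ^ j)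
    (G : ℕ → ℚ → ℚ)
    (hG : ∀ n : ℕ, 1 ≤ n → ∀ x : ℚ,
      G n x = ((-1 : ℚ) ^ n / (n.factorial : ℚ)) *
        ∑ j ∈ Finset.Icc 1 n, ((-1 : ℚ) ^ j / (j + 1 : ℚ)) * (s n j : ℚ) *
          ((x + 1) ^ (j + 1) - x ^ (j + 1)))
    (x : ℚ) (hden : x.den < p)
    (h1 : (x : ZMod p) + 1 ≠ 0) (h2 : (x : ZMod p) + 2 ≠ 0) :
    ((G (p - 1) x - 1 / (p.factorial : ℚ) : ℚ) : ZMod p) =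
      -((((x + 2) * ((x + 2) ^ (p - 1) - 1) / (p : ℚ)) : ℚ) : ZMod p)
        + ((((x + 1) * ((x + 1) ^ (p - 1) - 1) / (p : ℚ)) : ℚ) : ZMod p) + 1 := by
  have hp : p.Prime := Fact.out
  have hp1 : 1 ≤ p := hp.one_le
  have hpm : p % 2 = 1 := Nat.odd_iff.mp hodd
  have hp3 : 3 ≤ p := by
    have := hp.two_le; omega
  have hEven : Even (p-1) := Nat.Odd.sub_odd hodd odd_one
  obtain ⟨hsmod, hsnn⟩ := Stmt17Aux2.stirling_mod hodd s hs
  have hpQ : ((p:ℚ)) ≠ 0 := by exact_mod_cast hp.pos.ne'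
  have okden1 : ∀ q : ℚ, q.den = 1 → ¬ p ∣ q.den := by
    intro q hq h
    rw [hq] at h
    exact hp.one_lt.ne' (Nat.dvd_one.mp h)
  have okx : ¬ p ∣ x.den := fun h => absurd (Nat.le_of_dvd x.pos h) (by omega)
  have ok1 : ¬ p ∣ ((1:ℚ)).den := okden1 1 rfl
  have ok2 : ¬ p ∣ ((2:ℚ)).den := okden1 2 rfl
  have okx1 : ¬ p ∣ (x+1).den := ok_add okx ok1
  have okx2 : ¬ p ∣ (x+2).den := ok_add okx ok2
  have castx1 : ((x + 1 : ℚ) : ZMod p) = (x : ZMod p) + 1 := by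
    rw [cast_add' okx ok1, Rat.cast_one]
  have castx2 : ((x + 2 : ℚ) : ZMod p) = (x : ZMod p) + 2 := by
    rw [cast_add' okx ok2, Rat.cast_ofNat]
  have hf1 : ((x : ZMod p) + 1)^(p-1) = 1 := ZMod.pow_card_sub_one_eq_one h1
  have hf2 : ((x : ZMod p) + 2)^(p-1) = 1 := ZMod.pow_card_sub_one_eq_one h2
  have okm1 : ¬ p ∣ ((-1 : ℚ)).den := okden1 (-1) rfl
  -- choose quotient facts
  have hMk : ∀ k, 1 ≤ k → k ≤ p-1 → p * Mq p k = p.choose k := by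
    intro k h1' h2'
    exact Nat.mul_div_cancel' (hp.dvd_choose_self (by omega) (by omega))
  have hchoose : ∀ j, j + 1 ≤ p - 1 → (j+1) * Mq p (j+1) = (p-1).choose j := by
    intro j hj
    have h := Nat.add_one_mul_choose_eq (p-1) j
    rw [Nat.sub_add_cancel hp1] at h
    rw [← hMk (j+1) (by omega) hj] at h
    rw [mul_assoc] at h
    have := Nat.eq_of_mul_eq_mul_left hp.pos h
    rw [this]
    exact Nat.mul_comm _ _
  have hMmod : ∀ j, j + 1 ≤ p - 1 →
      (((j:ZMod p)+1)) * ((Mq p (j+1) : ZMod p)) = (-1:ZMod p)^j := by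
    intro j hj
    calc ((j:ZMod p)+1) * ((Mq p (j+1) : ZMod p))
        = (((j+1) * Mq p (j+1) : ℕ) : ZMod p) := by push_cast; ring
      _ = (((p-1).choose j : ℕ) : ZMod p) := by rw [hchoose j hj]
      _ = (-1:ZMod p)^j := choose_mod j (by omega)
  -- per-term facts for the main sum
  have hdcast : ∀ j ∈ Icc 1 (p-2), (¬ p ∣ (dt p s x j).den) ∧
      ((dt p s x j : ℚ) : ZMod p) =
        (Mq p (j+1) : ZMod p) * (((x:ZMod p)+1)^(j+1) - (x:ZMod p)^(j+1)) := by
    intro j hj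
    obtain ⟨hj1, hj2⟩ := mem_Icc.mp hj
    have hjp : j + 1 < p := by omega
    have okA : ¬ p ∣ ((-1:ℚ)^j * (s (p-1) j : ℚ) * ((x+1)^(j+1) - x^(j+1))).den :=
      ok_mul (ok_mul (ok_pow okm1 j) (ok_nat _))
        (ok_sub (ok_pow okx1 (j+1)) (ok_pow okx (j+1)))
    have hrw : dt p s x j
        = ((-1:ℚ)^j * (s (p-1) j : ℚ) * ((x+1)^(j+1) - x^(j+1))) / (((j+1 : ℕ) : ℚ)) := by
      unfold dt
      push_cast
      ring
    have oknj : ¬ p ∣ (j + 1) := not_dvd_of_lt (by omega) hjp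
    constructor
    · rw [hrw]; exact ok_div_nat okA oknj
    · rw [hrw, cast_div_nat' okA oknj]
      rw [cast_mul' (ok_mul (ok_pow okm1 j) (ok_nat _))
            (ok_sub (ok_pow okx1 (j+1)) (ok_pow okx (j+1))),
          cast_mul' (ok_pow okm1 j) (ok_nat _),
          cast_pow' okm1 j,
          cast_sub' (ok_pow okx1 (j+1)) (ok_pow okx (j+1)),
          cast_pow' okx1 (j+1), cast_pow' okx (j+1), castx1]
      rw [Rat.cast_natCast, hsmod j hj1 (by omega), mul_one]
      have hne : ((j+1 : ℕ) : ZMod p) ≠ 0 := by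
        intro h
        exact oknj ((ZMod.natCast_eq_zero_iff _ _).mp h)
      rw [div_eq_iff hne]
      have hMj := hMmod j (by omega)
      have hcast1 : ((-1:ℚ) : ZMod p) = -1 := by
        rw [Rat.cast_neg, Rat.cast_one]
      rw [hcast1]
      push_cast
      linear_combination ((x:ZMod p)^(j+1) - ((x:ZMod p)+1)^(j+1)) * hMj
  -- the D-sum per-term facts
  have hDcast : ∀ j ∈ Icc 1 (p-2), (¬ p ∣ ((Mq p (j+1) : ℚ) * ((x+1)^(j+1) - x^(j+1))).den) ∧
      (((Mq p (j+1) : ℚ) * ((x+1)^(j+1) - x^(j+1)) : ℚ) : ZMod p) =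
        (Mq p (j+1) : ZMod p) * (((x:ZMod p)+1)^(j+1) - (x:ZMod p)^(j+1)) := by
    intro j hj
    refine ⟨ok_mul (ok_nat _) (ok_sub (ok_pow okx1 (j+1)) (ok_pow okx (j+1))), ?_⟩
    rw [cast_mul' (ok_nat _) (ok_sub (ok_pow okx1 (j+1)) (ok_pow okx (j+1))),
        cast_sub' (ok_pow okx1 (j+1)) (ok_pow okx (j+1)),
        cast_pow' okx1 (j+1), cast_pow' okx (j+1), castx1, Rat.cast_natCast]
  obtain ⟨okS, hcastS⟩ := ok_cast_sum (Icc 1 (p-2)) (dt p s x) (fun j hj => (hdcast j hj).1)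
  obtain ⟨okD, hcastD⟩ := ok_cast_sum (Icc 1 (p-2))
    (fun j => (Mq p (j+1) : ℚ) * ((x+1)^(j+1) - x^(j+1))) (fun j hj => (hDcast j hj).1)
  have hSD : ((∑ j ∈ Icc 1 (p-2), dt p s x j : ℚ) : ZMod p)
      = ((∑ j ∈ Icc 1 (p-2), (Mq p (j+1) : ℚ) * ((x+1)^(j+1) - x^(j+1)) : ℚ) : ZMod p) := by
    rw [hcastS, hcastD]
    exact sum_congr rfl fun j hj => by rw [(hdcast j hj).2, (hDcast j hj).2]
  -- last term and T
  have hdlast : dt p s x (p-1) = ((x+1)^p - x^p) / (p:ℚ) := by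
    unfold dt
    rw [hsnn]
    have e1 : (p-1) + 1 = p := by omega
    have e2 : (((p-1):ℕ):ℚ) + 1 = (p:ℚ) := by
      push_cast [Nat.cast_sub hp1]; ring
    rw [e1, hEven.neg_one_pow, e2, Nat.cast_one]
    ring
  have hT : dt p s x (p-1) - 1/(p:ℚ) = ((x+1)^p - x^p - 1)/(p:ℚ) := by
    rw [hdlast]; ring
  have okN : ¬ p ∣ ((x+1)^p - x^p - 1).den :=
    ok_sub (ok_sub (ok_pow okx1 p) (ok_pow okx p)) ok1
  have hN0 : (((x+1)^p - x^p - 1 : ℚ) : ZMod p) = 0 := by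
    rw [cast_sub' (ok_sub (ok_pow okx1 p) (ok_pow okx p)) ok1,
        cast_sub' (ok_pow okx1 p) (ok_pow okx p),
        cast_pow' okx1 p, cast_pow' okx p, castx1, Rat.cast_one,
        ZMod.pow_card, ZMod.pow_card]
    ring
  have okT : ¬ p ∣ (dt p s x (p-1) - 1/(p:ℚ)).den := by
    rw [hT]; exact ok_div_p okN hN0
  -- q1, q2
  have okN2 : ¬ p ∣ ((x + 2) * ((x + 2) ^ (p - 1) - 1)).den :=
    ok_mul okx2 (ok_sub (ok_pow okx2 (p-1)) ok1)
  have hN20 : (((x + 2) * ((x + 2) ^ (p - 1) - 1) : ℚ) : ZMod p) = 0 := by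
    rw [cast_mul' okx2 (ok_sub (ok_pow okx2 (p-1)) ok1),
        cast_sub' (ok_pow okx2 (p-1)) ok1, cast_pow' okx2 (p-1), castx2, Rat.cast_one, hf2]
    ring
  have okq2 : ¬ p ∣ ((x + 2) * ((x + 2) ^ (p - 1) - 1) / (p:ℚ)).den := ok_div_p okN2 hN20
  have okN1 : ¬ p ∣ ((x + 1) * ((x + 1) ^ (p - 1) - 1)).den :=
    ok_mul okx1 (ok_sub (ok_pow okx1 (p-1)) ok1)
  have hN10 : (((x + 1) * ((x + 1) ^ (p - 1) - 1) : ℚ) : ZMod p) = 0 := by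
    rw [cast_mul' okx1 (ok_sub (ok_pow okx1 (p-1)) ok1),
        cast_sub' (ok_pow okx1 (p-1)) ok1, cast_pow' okx1 (p-1), castx1, Rat.cast_one, hf1]
    ring
  have okq1 : ¬ p ∣ ((x + 1) * ((x + 1) ^ (p - 1) - 1) / (p:ℚ)).den := ok_div_p okN1 hN10
  -- the binomial identity
  have hbinom : ∀ y : ℚ, ∑ j ∈ Icc 1 (p-2), (p.choose (j+1) : ℚ) * y^(j+1)
      = (y+1)^p - y^p - p*y - 1 := by
    intro y
    have hadd := add_pow y 1 p
    rw [sum_congr rfl (fun k (_ : k ∈ range (p+1)) => by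
      rw [one_pow, mul_one] : ∀ k ∈ range (p+1),
        y^k * 1^(p-k) * (p.choose k : ℚ) = y^k * (p.choose k : ℚ))] at hadd
    rw [sum_range_succ, Nat.choose_self] at hadd
    rw [range_eq_Ico, ← Finset.sum_Ico_consecutive _ (show 0 ≤ 2 by omega) (show 2 ≤ p by omega)]
      at hadd
    have h3 : ∑ k ∈ Ico 0 2, y^k * (p.choose k : ℚ) = 1 + p*y := by
      rw [show Ico 0 2 = range 2 by rw [range_eq_Ico]]
      rw [sum_range_succ, sum_range_succ, sum_range_zero]
      simp [Nat.choose_one_right]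
      ring
    have h4 : ∑ k ∈ Ico 2 p, y^k * (p.choose k : ℚ)
        = ∑ j ∈ Icc 1 (p-2), (p.choose (j+1):ℚ)*y^(j+1) := by
      rw [show Ico 2 p = Icc 2 (p-1) by rw [← Finset.Ico_add_one_right_eq_Icc]; congr 1; omega]
      rw [show Icc 2 (p-1) = (Icc 1 (p-2)).map (addRightEmbedding 1) by
        rw [Finset.map_add_right_Icc]; congr 1 <;> omega]
      rw [Finset.sum_map]
      refine sum_congr rfl fun j _ => ?_
      simp only [addRightEmbedding_apply]
      ring
    rw [h3, h4] at hadd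
    push_cast at hadd
    linear_combination (-1 : ℚ) * hadd
  -- p * D
  have hpD : (p:ℚ) * (∑ j ∈ Icc 1 (p-2), (Mq p (j+1) : ℚ) * ((x+1)^(j+1) - x^(j+1)))
      = ∑ j ∈ Icc 1 (p-2), (p.choose (j+1):ℚ) * ((x+1)^(j+1) - x^(j+1)) := by
    rw [mul_sum]
    refine sum_congr rfl fun j hj => ?_
    obtain ⟨hj1, hj2⟩ := mem_Icc.mp hj
    have hM := hMk (j+1) (by omega) (by omega)
    calc (p:ℚ) * ((Mq p (j+1) : ℚ) * ((x+1)^(j+1) - x^(j+1)))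
        = ((p * Mq p (j+1) : ℕ):ℚ) * ((x+1)^(j+1) - x^(j+1)) := by push_cast; ring
      _ = (p.choose (j+1):ℚ) * ((x+1)^(j+1) - x^(j+1)) := by rw [hM]
  -- the exact rational identity D + T = q2 - q1 - 1
  have hDT : (∑ j ∈ Icc 1 (p-2), (Mq p (j+1) : ℚ) * ((x+1)^(j+1) - x^(j+1)))
        + (dt p s x (p-1) - 1/(p:ℚ))
      = (x + 2) * ((x + 2) ^ (p - 1) - 1) / (p:ℚ)
        - (x + 1) * ((x + 1) ^ (p - 1) - 1) / (p:ℚ) - 1 := by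
    apply mul_left_cancel₀ hpQ
    have hcancel : ∀ a : ℚ, (p:ℚ) * (a/(p:ℚ)) = a := fun a => by field_simp
    rw [mul_add, hpD, hT, hcancel, mul_sub, mul_sub, hcancel, hcancel]
    have hsplit : ∑ j ∈ Icc 1 (p-2), (p.choose (j+1):ℚ) * ((x+1)^(j+1) - x^(j+1))
        = (∑ j ∈ Icc 1 (p-2), (p.choose (j+1):ℚ) * (x+1)^(j+1))
          - (∑ j ∈ Icc 1 (p-2), (p.choose (j+1):ℚ) * x^(j+1)) := by
      rw [← Finset.sum_sub_distrib]
      exact sum_congr rfl fun j _ => by ring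
    rw [hsplit, hbinom (x+1), hbinom x]
    have e1 : (x+2)^p = (x+2)^(p-1) * (x+2) := by
      rw [← pow_succ, Nat.sub_add_cancel hp1]
    have e2 : (x+1)^p = (x+1)^(p-1) * (x+1) := by
      rw [← pow_succ, Nat.sub_add_cancel hp1]
    linear_combination e1 - e2
  -- split the G-sum
  have hsum : ∑ j ∈ Icc 1 (p-1), dt p s x j
      = (∑ j ∈ Icc 1 (p-2), dt p s x j) + dt p s x (p-1) := by
    rw [show Icc 1 (p-1) = Icc 1 ((p-2)+1) by congr 1; omega]
    rw [Finset.sum_Icc_succ_top (by omega)]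
    rw [show (p-2)+1 = p-1 by omega]
  -- rewrite G
  have hGx : G (p-1) x = (∑ j ∈ Icc 1 (p-1), dt p s x j) / (((p-1).factorial : ℚ)) := by
    rw [hG (p-1) (by omega) x, hEven.neg_one_pow]
    rw [show (∑ j ∈ Icc 1 (p-1), ((-1 : ℚ) ^ j / (j + 1 : ℚ)) * (s (p-1) j : ℚ) *
          ((x + 1) ^ (j + 1) - x ^ (j + 1))) = ∑ j ∈ Icc 1 (p-1), dt p s x j from
      sum_congr rfl fun j _ => rfl]
    ring
  have hfactnat : p.factorial = p * (p-1).factorial := by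
    conv_lhs => rw [show p = (p-1)+1 by omega]
    rw [Nat.factorial_succ, Nat.sub_add_cancel hp1]
  have hfact : (p.factorial : ℚ) = (p:ℚ) * ((p-1).factorial : ℚ) := by
    rw [hfactnat]; push_cast; ring
  have hokfact : ¬ p ∣ (p-1).factorial := by
    intro h
    exact absurd ((Nat.Prime.dvd_factorial hp).mp h) (by omega)
  have hf0 : (((p-1).factorial : ℚ)) ≠ 0 := by positivity
  have hmain : G (p-1) x - 1/(p.factorial:ℚ)
      = ((∑ j ∈ Icc 1 (p-2), dt p s x j) + (dt p s x (p-1) - 1/(p:ℚ)))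
          / ((p-1).factorial : ℚ) := by
    rw [hGx, hsum, hfact]
    field_simp
    ring
  rw [hmain]
  have okST : ¬ p ∣ ((∑ j ∈ Icc 1 (p-2), dt p s x j) + (dt p s x (p-1) - 1/(p:ℚ))).den :=
    ok_add okS okT
  rw [show (((p-1).factorial : ℚ)) = (((p-1).factorial : ℕ) : ℚ) by push_cast; ring] at *
  rw [cast_div_nat' okST hokfact]
  rw [cast_add' okS okT, hSD, ← cast_add' okD okT, hDT]
  rw [cast_sub' (ok_sub okq2 okq1) ok1, cast_sub' okq2 okq1, Rat.cast_one]
  rw [ZMod.wilsons_lemma]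
  field_simp
  ring
end MainProof
end
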